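/- arXiv:1806.10855 — 7 statements merged into one kernel-verified Lean document; each statement's English description precedes it below -/
import Mathlib

section
/- Fix integers n ≥ 1, L ≥ 1, nonnegative integers ν_1,…,ν_L and integers m_1,…,m_L with m_1 ≥ 2n+ν_1 and m_j ≥ n+ν_j+1 for 2 ≤ j ≤ L. Then for every i ∈ {1,…,n} and every integer j ≥ 1, the moments of the weight function w_i^{(L)} are given by ∫_0^∞ x^{j−1} w_i^{(L)}(x) dx = [Γ(ν_1+i+j−1) · Γ(m_1−2n−ν_1+1) / Γ(m_1−2n+i+j)] · ∏_{k=2}^{L} [Γ(ν_k+j) · Γ(m_k−n−ν_k) / Γ(m_k−n+j)]. -/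
open Finset MeasureTheory Real

private lemma meas_zpow (z : ℤ) : Measurable fun x : ℝ => x ^ z := by
  rcases z with k | k
  · simpa using (measurable_id.pow_const k : Measurable fun x : ℝ => x ^ k)
  · simpa [zpow_negSucc] using
      ((measurable_id.pow_const (k + 1) : Measurable fun x : ℝ => x ^ (k + 1)))

private lemma real_beta {s t : ℝ} (hs : 0 < s) (ht : 0 < t) :
    ∫ x in (0:ℝ)..1, x ^ (s - 1) * (1 - x) ^ (t - 1) =
      Real.Gamma s * Real.Gamma t / Real.Gamma (s + t) := by
  have h := Complex.Gamma_mul_Gamma_eq_betaIntegral (s := (s:ℂ)) (t := (t:ℂ))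
    (by simpa using hs) (by simpa using ht)
  have heq : Complex.betaIntegral s t
      = ((∫ x in (0:ℝ)..1, x ^ (s - 1) * (1 - x) ^ (t - 1) : ℝ) : ℂ) := by
    rw [Complex.betaIntegral, ← intervalIntegral.integral_ofReal]
    refine intervalIntegral.integral_congr fun x hx => ?_
    rw [Set.uIcc_of_le (by norm_num : (0:ℝ) ≤ 1)] at hx
    have h0 : (0:ℝ) ≤ x := hx.1
    have h1 : (0:ℝ) ≤ 1 - x := by linarith [hx.2]
    rw [Complex.ofReal_mul, Complex.ofReal_cpow h0, Complex.ofReal_cpow h1]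
    push_cast
    ring
  rw [heq, ← Complex.ofReal_add, Complex.Gamma_ofReal, Complex.Gamma_ofReal,
    Complex.Gamma_ofReal, ← Complex.ofReal_mul, ← Complex.ofReal_mul] at h
  have h' := Complex.ofReal_inj.mp h
  have hne : Real.Gamma (s + t) ≠ 0 := (Real.Gamma_pos_of_pos (by linarith)).ne'
  field_simp
  linarith [h']

private lemma beta_lintegral {s t : ℝ} (hs : 0 < s) (ht : 0 < t) :
    ∫⁻ x in Set.Ioo (0:ℝ) 1, ENNReal.ofReal (x ^ (s - 1) * (1 - x) ^ (t - 1)) =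
      ENNReal.ofReal (Real.Gamma s * Real.Gamma t / Real.Gamma (s + t)) := by
  have hconv := Complex.betaIntegral_convergent (u := (s:ℂ)) (v := (t:ℂ))
    (by simpa using hs) (by simpa using ht)
  have hIoc : IntegrableOn (fun x : ℝ => (x:ℂ) ^ ((s:ℂ) - 1) * (1 - (x:ℂ)) ^ ((t:ℂ) - 1))
      (Set.Ioc 0 1) volume := by
    rwa [intervalIntegrable_iff_integrableOn_Ioc_of_le (by norm_num)] at hconv
  have hre : IntegrableOn (fun x : ℝ => x ^ (s - 1) * (1 - x) ^ (t - 1)) (Set.Ioc 0 1) volume := by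
    refine hIoc.re.congr ?_
    filter_upwards [ae_restrict_mem measurableSet_Ioc] with x hx
    have h0 : (0:ℝ) ≤ x := hx.1.le
    have h1 : (0:ℝ) ≤ 1 - x := by linarith [hx.2]
    have hxx : ((x:ℂ) ^ ((s:ℂ) - 1) * (1 - (x:ℂ)) ^ ((t:ℂ) - 1))
        = ((x ^ (s-1) * (1-x)^(t-1) : ℝ) : ℂ) := by
      rw [Complex.ofReal_mul, Complex.ofReal_cpow h0, Complex.ofReal_cpow h1]
      push_cast
      ring
    rw [hxx]
    simp
  have hIoo : IntegrableOn (fun x : ℝ => x ^ (s - 1) * (1 - x) ^ (t - 1)) (Set.Ioo 0 1) volume :=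
    hre.mono_set Set.Ioo_subset_Ioc_self
  rw [← ofReal_integral_eq_lintegral_ofReal hIoo]
  · congr 1
    rw [← real_beta hs ht, intervalIntegral.integral_of_le (by norm_num : (0:ℝ) ≤ 1)]
    exact setIntegral_congr_set Ioo_ae_eq_Ioc
  · filter_upwards [ae_restrict_mem measurableSet_Ioo] with x hx
    exact mul_nonneg (Real.rpow_nonneg hx.1.le _) (Real.rpow_nonneg (by linarith [hx.2]) _)

private lemma lint_scale (f : ℝ → ENNReal) (hf : Measurable f) {c : ℝ} (hc : 0 < c) :
    ∫⁻ x in Set.Ioi (0:ℝ), f (x / c) = ENNReal.ofReal c * ∫⁻ x in Set.Ioi (0:ℝ), f x := by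
  have hpre : (fun x : ℝ => c⁻¹ * x) ⁻¹' (Set.Ioi 0) = Set.Ioi 0 := by
    ext x
    simp only [Set.mem_preimage, Set.mem_Ioi]
    constructor
    · intro h
      by_contra hx
      push_neg at hx
      nlinarith [inv_pos.2 hc]
    · intro h
      positivity
  have hmap : Measure.map (fun x : ℝ => c⁻¹ * x) (volume.restrict (Set.Ioi 0))
      = (ENNReal.ofReal c) • volume.restrict (Set.Ioi 0) := by
    conv_lhs => rw [← hpre]
    rw [← Measure.restrict_map (measurable_const_mul _) measurableSet_Ioi,
      Real.map_volume_mul_left (inv_ne_zero hc.ne'), inv_inv, abs_of_pos hc,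
      Measure.restrict_smul]
  calc ∫⁻ x in Set.Ioi (0:ℝ), f (x / c) = ∫⁻ x in Set.Ioi (0:ℝ), f (c⁻¹ * x) := by
        simp_rw [div_eq_inv_mul]
    _ = ∫⁻ y, f y ∂(Measure.map (fun x => c⁻¹ * x) (volume.restrict (Set.Ioi 0))) :=
        (lintegral_map hf (measurable_const_mul _)).symm
    _ = ENNReal.ofReal c * ∫⁻ x in Set.Ioi (0:ℝ), f x := by
        rw [hmap, lintegral_smul_measure, smul_eq_mul]

/-- The weight functions `w_i^{(l)}`: `w_i^{(1)}(x) = x^{ν_1+i−1}(1−x)^{m_1−2n−ν_1}` on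
`(0,1)` and `0` elsewhere, and recursively
`w_i^{(l+1)}(y) = ∫_0^1 τ^{ν_{l+1}−1}(1−τ)^{m_{l+1}−n−ν_{l+1}−1} w_i^{(l)}(y/τ) dτ`. -/
noncomputable def wFun (n : ℕ) (ν m : ℕ → ℕ) (i : ℕ) : ℕ → ℝ → ℝ
  | 0, _ => 0
  | 1, x =>
      if 0 < x ∧ x < 1 then
        x ^ ((ν 1 : ℤ) + (i : ℤ) - 1) * (1 - x) ^ ((m 1 : ℤ) - 2 * (n : ℤ) - (ν 1 : ℤ))
      else 0
  | (l + 2), y =>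
      ∫ τ in (0 : ℝ)..1,
        τ ^ ((ν (l + 2) : ℤ) - 1) * (1 - τ) ^ ((m (l + 2) : ℤ) - (n : ℤ) - (ν (l + 2) : ℤ) - 1) *
          wFun n ν m i (l + 1) (y / τ)

noncomputable def Mom (n : ℕ) (ν m : ℕ → ℕ) (i : ℕ) (l j : ℕ) : ℝ :=
  Real.Gamma ((ν 1 : ℝ) + i + j - 1) * Real.Gamma ((m 1 : ℝ) - 2 * n - ν 1 + 1) /
      Real.Gamma ((m 1 : ℝ) - 2 * n + i + j) *
    ∏ k ∈ Finset.Icc 2 l,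
      Real.Gamma ((ν k : ℝ) + j) * Real.Gamma ((m k : ℝ) - n - ν k) /
        Real.Gamma ((m k : ℝ) - n + j)

private lemma master (n : ℕ) (ν m : ℕ → ℕ) (i : ℕ) (hi1 : 1 ≤ i)
    (hm1 : 2 * n + ν 1 ≤ m 1) :
    ∀ l : ℕ, 1 ≤ l → (∀ k, 2 ≤ k → k ≤ l → n + ν k + 1 ≤ m k) →
      Measurable (wFun n ν m i l) ∧ (∀ x, 0 ≤ wFun n ν m i l x) ∧
        (∀ x : ℝ, x ∉ Set.Ioo (0:ℝ) 1 → wFun n ν m i l x = 0) ∧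
        ∀ j : ℕ, 1 ≤ j →
          ∫⁻ x in Set.Ioi (0:ℝ), ENNReal.ofReal (x ^ (j - 1) * wFun n ν m i l x) =
            ENNReal.ofReal (Mom n ν m i l j) := by
  intro l hl
  induction l, hl using Nat.le_induction with
  | base =>
    intro _
    have hW1 : wFun n ν m i 1 = fun x : ℝ =>
        if 0 < x ∧ x < 1 then
          x ^ ((ν 1 : ℤ) + (i : ℤ) - 1) * (1 - x) ^ ((m 1 : ℤ) - 2 * (n : ℤ) - (ν 1 : ℤ))
        else 0 := rfl
    have hmeas : Measurable (wFun n ν m i 1) := by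
      rw [hW1]
      refine Measurable.ite (measurableSet_Ioo : MeasurableSet (Set.Ioo (0:ℝ) 1)) ?_
        measurable_const
      exact (meas_zpow _).mul ((meas_zpow _).comp (measurable_const.sub measurable_id))
    have hnn : ∀ x, 0 ≤ wFun n ν m i 1 x := by
      intro x
      rw [hW1]
      dsimp only
      split_ifs with h
      · exact mul_nonneg (zpow_nonneg h.1.le _) (zpow_nonneg (by linarith [h.2]) _)
      · exact le_refl 0
    have hsupp : ∀ x : ℝ, x ∉ Set.Ioo (0:ℝ) 1 → wFun n ν m i 1 x = 0 := by
      intro x hx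
      rw [hW1]
      dsimp only
      rw [if_neg]
      intro h
      exact hx ⟨h.1, h.2⟩
    refine ⟨hmeas, hnn, hsupp, fun j hj => ?_⟩
    set s : ℝ := (ν 1 : ℝ) + i + j - 1 with hs_def
    set t : ℝ := (m 1 : ℝ) - 2 * n - ν 1 + 1 with ht_def
    have hi1' : (1:ℝ) ≤ i := by exact_mod_cast hi1
    have hj1' : (1:ℝ) ≤ j := by exact_mod_cast hj
    have hm1' : (2 * n + ν 1 : ℝ) ≤ m 1 := by exact_mod_cast hm1
    have hs_pos : 0 < s := by rw [hs_def]; have : (0:ℝ) ≤ ν 1 := Nat.cast_nonneg _; linarith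
    have ht_pos : 0 < t := by rw [ht_def]; push_cast at hm1'; linarith
    have hsub1 : Function.support
        (fun x : ℝ => ENNReal.ofReal (x ^ (j - 1) * wFun n ν m i 1 x)) ⊆ Set.Ioo 0 1 := by
      intro x hx
      by_contra hxm
      apply hx
      show ENNReal.ofReal (x ^ (j - 1) * wFun n ν m i 1 x) = 0
      rw [hsupp x hxm, mul_zero, ENNReal.ofReal_zero]
    have hsub2 : Function.support
        (fun x : ℝ => ENNReal.ofReal (x ^ (j - 1) * wFun n ν m i 1 x)) ⊆ Set.Ioi 0 :=
      hsub1.trans (fun x hx => hx.1)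
    rw [setLIntegral_eq_of_support_subset hsub2, ← setLIntegral_eq_of_support_subset hsub1]
    have hcong : ∫⁻ x in Set.Ioo (0:ℝ) 1, ENNReal.ofReal (x ^ (j - 1) * wFun n ν m i 1 x)
        = ∫⁻ x in Set.Ioo (0:ℝ) 1, ENNReal.ofReal (x ^ (s - 1) * (1 - x) ^ (t - 1)) := by
      refine setLIntegral_congr_fun measurableSet_Ioo (fun x hx => ?_)
      congr 1
      rw [hW1]
      dsimp only
      rw [if_pos ⟨hx.1, hx.2⟩]
      rw [← mul_assoc]
      congr 1
      · rw [← Real.rpow_natCast x (j-1), ← Real.rpow_intCast x _, ← Real.rpow_add hx.1]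
        congr 1
        rw [hs_def]
        push_cast [Nat.cast_sub hj]
        ring
      · rw [← Real.rpow_intCast (1-x) _]
        congr 1
        rw [ht_def]
        push_cast
        ring
    rw [hcong, beta_lintegral hs_pos ht_pos]
    congr 1
    rw [Mom]
    rw [show Finset.Icc 2 1 = (∅ : Finset ℕ) from Finset.Icc_eq_empty (by norm_num)]
    rw [Finset.prod_empty, mul_one]
    have : s + t = (m 1 : ℝ) - 2 * n + i + j := by rw [hs_def, ht_def]; ring
    rw [this]
  | succ u hu IH =>
    intro hml1
    have hml : ∀ k, 2 ≤ k → k ≤ u → n + ν k + 1 ≤ m k := fun k h2 hk =>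
      hml1 k h2 (hk.trans (Nat.le_succ u))
    obtain ⟨hWm, hWnn, hWsupp, hWmom⟩ := IH hml
    obtain ⟨v, rfl⟩ : ∃ v, u = v + 1 := ⟨u - 1, (Nat.succ_pred_eq_of_pos hu).symm⟩
    set K := v + 2 with hK_def
    have hmK : n + ν K + 1 ≤ m K := hml1 K (by omega) (by omega)
    set a : ℤ := (ν K : ℤ) - 1 with ha_def
    set b : ℤ := (m K : ℤ) - n - ν K - 1 with hb_def
    set W := wFun n ν m i (v + 1) with hW_def
    have hWeq : ∀ y : ℝ, wFun n ν m i (v + 2) y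
        = ∫ τ in (0:ℝ)..1, τ ^ a * (1 - τ) ^ b * W (y / τ) := fun y => rfl
    -- measurability of the two-variable integrand
    have hF : Measurable (fun p : ℝ × ℝ => p.1 ^ a * (1 - p.1) ^ b * W (p.2 / p.1)) :=
      (((meas_zpow a).comp measurable_fst).mul
        ((meas_zpow b).comp (measurable_const.sub measurable_fst))).mul
        (hWm.comp (measurable_snd.div measurable_fst))
    set G : ℝ → ENNReal := fun x =>
      ∫⁻ τ in Set.Ioc (0:ℝ) 1, ENNReal.ofReal (τ ^ a * (1 - τ) ^ b * W (x / τ)) with hG_def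
    have hGm : Measurable G := by
      rw [hG_def]
      exact Measurable.lintegral_prod_left (ENNReal.measurable_ofReal.comp hF)
    have hFnn : ∀ x : ℝ, ∀ τ ∈ Set.Ioc (0:ℝ) 1, 0 ≤ τ ^ a * (1 - τ) ^ b * W (x / τ) := by
      intro x τ hτ
      exact mul_nonneg (mul_nonneg (zpow_nonneg hτ.1.le _)
        (zpow_nonneg (by linarith [hτ.2]) _)) (hWnn _)
    have hW2eq : ∀ x : ℝ, wFun n ν m i (v + 2) x = (G x).toReal := by
      intro x
      rw [hWeq, intervalIntegral.integral_of_le zero_le_one,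
        integral_eq_lintegral_of_nonneg_ae ?_ ?_]
      · filter_upwards [ae_restrict_mem measurableSet_Ioc] with τ hτ
        exact hFnn x τ hτ
      · exact (hF.comp (measurable_id.prodMk measurable_const)).aestronglyMeasurable
    have hW2nn : ∀ x, 0 ≤ wFun n ν m i (v + 2) x := by
      intro x
      rw [hWeq]
      refine intervalIntegral.integral_nonneg zero_le_one fun τ hτ => ?_
      exact mul_nonneg (mul_nonneg (zpow_nonneg hτ.1 _)
        (zpow_nonneg (by linarith [hτ.2]) _)) (hWnn _)
    have hW2supp : ∀ x : ℝ, x ∉ Set.Ioo (0:ℝ) 1 → wFun n ν m i (v + 2) x = 0 := by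
      intro x hx
      rw [hWeq, intervalIntegral.integral_of_le zero_le_one]
      have hz : ∀ τ ∈ Set.Ioc (0:ℝ) 1, τ ^ a * (1 - τ) ^ b * W (x / τ) = 0 := by
        intro τ hτ
        have hWz : W (x / τ) = 0 := by
          refine hWsupp _ ?_
          intro hmem
          apply hx
          constructor
          · by_contra hx0
            push_neg at hx0
            have : x / τ ≤ 0 := div_nonpos_of_nonpos_of_nonneg hx0 hτ.1.le
            linarith [hmem.1]
          · by_contra hx1
            push_neg at hx1
            have : (1:ℝ) ≤ x / τ := by
              rw [le_div_iff₀ hτ.1]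
              nlinarith [hτ.2]
            linarith [hmem.2]
        rw [hWz, mul_zero]
      rw [setIntegral_congr_fun measurableSet_Ioc hz]
      simp
    -- the key computation
    have hWm2 : Measurable (wFun n ν m i (v + 2)) := by
      have : wFun n ν m i (v + 2) = fun x => (G x).toReal := funext hW2eq
      rw [this]
      exact hGm.ennreal_toReal
    have key : ∀ j : ℕ, 1 ≤ j →
        ∫⁻ x in Set.Ioi (0:ℝ), ENNReal.ofReal (x ^ (j - 1)) * G x
          = ENNReal.ofReal (Mom n ν m i (v + 2) j) := by
      intro j hj
      have hj1' : (1:ℝ) ≤ j := by exact_mod_cast hj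
      set s : ℝ := (ν K : ℝ) + j with hs_def
      set t : ℝ := (m K : ℝ) - n - ν K with ht_def
      have hs_pos : 0 < s := by
        rw [hs_def]
        have : (0:ℝ) ≤ ν K := Nat.cast_nonneg _
        linarith
      have ht_pos : 0 < t := by
        rw [ht_def]
        have : (n + ν K + 1 : ℝ) ≤ m K := by exact_mod_cast hmK
        push_cast at this
        linarith
      have hmfun : Measurable fun y : ℝ => ENNReal.ofReal (y ^ (j - 1) * W y) :=
        ENNReal.measurable_ofReal.comp ((measurable_id.pow_const _).mul hWm)
      calc ∫⁻ x in Set.Ioi (0:ℝ), ENNReal.ofReal (x ^ (j - 1)) * G x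
          = ∫⁻ x in Set.Ioi (0:ℝ), ∫⁻ τ in Set.Ioc (0:ℝ) 1,
              ENNReal.ofReal (x ^ (j - 1)) * ENNReal.ofReal (τ ^ a * (1 - τ) ^ b * W (x / τ)) := by
            refine lintegral_congr fun x => ?_
            rw [hG_def]
            exact (lintegral_const_mul _ (ENNReal.measurable_ofReal.comp
              (hF.comp (measurable_id.prodMk measurable_const)))).symm
        _ = ∫⁻ τ in Set.Ioc (0:ℝ) 1, ∫⁻ x in Set.Ioi (0:ℝ),
              ENNReal.ofReal (x ^ (j - 1)) * ENNReal.ofReal (τ ^ a * (1 - τ) ^ b * W (x / τ)) := by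
            refine lintegral_lintegral_swap ?_
            refine Measurable.aemeasurable ?_
            exact ((ENNReal.measurable_ofReal.comp (measurable_fst.pow_const _)).mul
              (ENNReal.measurable_ofReal.comp (hF.comp
                (measurable_snd.prodMk measurable_fst))))
        _ = ∫⁻ τ in Set.Ioo (0:ℝ) 1, ∫⁻ x in Set.Ioi (0:ℝ),
              ENNReal.ofReal (x ^ (j - 1)) * ENNReal.ofReal (τ ^ a * (1 - τ) ^ b * W (x / τ)) := by
            rw [Measure.restrict_congr_set Ioo_ae_eq_Ioc]
        _ = ∫⁻ τ in Set.Ioo (0:ℝ) 1,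
              ENNReal.ofReal (τ ^ (s - 1) * (1 - τ) ^ (t - 1)) *
                ENNReal.ofReal (Mom n ν m i (v + 1) j) := by
            refine setLIntegral_congr_fun measurableSet_Ioo (fun τ hτ => ?_)
            have hτ0 : (0:ℝ) < τ := hτ.1
            have hτ1 : (0:ℝ) ≤ 1 - τ := by linarith [hτ.2]
            have hcoef : (0:ℝ) ≤ τ ^ a * (1 - τ) ^ b :=
              mul_nonneg (zpow_nonneg hτ0.le _) (zpow_nonneg hτ1 _)
            have step1 : ∫⁻ x in Set.Ioi (0:ℝ),
                ENNReal.ofReal (x ^ (j - 1)) * ENNReal.ofReal (τ ^ a * (1 - τ) ^ b * W (x / τ))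
                = ENNReal.ofReal (τ ^ a * (1 - τ) ^ b * τ ^ (j - 1)) *
                    ∫⁻ x in Set.Ioi (0:ℝ), ENNReal.ofReal ((x / τ) ^ (j - 1) * W (x / τ)) := by
              have hcm : Measurable fun x : ℝ =>
                  ENNReal.ofReal ((x / τ) ^ (j - 1) * W (x / τ)) :=
                hmfun.comp (measurable_id.div_const τ)
              rw [← lintegral_const_mul _ hcm]
              refine setLIntegral_congr_fun measurableSet_Ioi (fun x hx => ?_)
              rw [← ENNReal.ofReal_mul (pow_nonneg (Set.mem_Ioi.mp hx).le _),
                  ← ENNReal.ofReal_mul (by positivity)]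
              congr 1
              have hτne : τ ≠ 0 := hτ0.ne'
              field_simp
              have hp : τ ^ (j - 1) ≠ 0 := pow_ne_zero _ hτne
              rw [div_pow, mul_assoc _ (τ ^ (j - 1)), mul_div_assoc', mul_div_cancel_left₀ _ hp]
              ring
            rw [step1, lint_scale _ hmfun hτ0, hWmom j hj]
            rw [← mul_assoc, ← ENNReal.ofReal_mul (by positivity)]
            congr 2
            rw [← Real.rpow_intCast τ a, ← Real.rpow_intCast (1-τ) b,
              ← Real.rpow_natCast τ (j-1)]
            rw [show (τ : ℝ) ^ (a:ℝ) * (1-τ) ^ (b:ℝ) * τ ^ (((j-1 : ℕ)):ℝ) * τ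
                = (τ ^ (a:ℝ) * τ ^ (((j-1:ℕ)):ℝ) * τ ^ (1:ℝ)) * (1-τ) ^ (b:ℝ) by
              rw [Real.rpow_one]; ring]
            rw [← Real.rpow_add hτ0, ← Real.rpow_add hτ0]
            congr 1
            · congr 1
              rw [hs_def, ha_def]
              push_cast [Nat.cast_sub hj]
              ring
            · congr 1
              rw [ht_def, hb_def]
              push_cast
              ring
        _ = (∫⁻ τ in Set.Ioo (0:ℝ) 1, ENNReal.ofReal (τ ^ (s - 1) * (1 - τ) ^ (t - 1))) *
              ENNReal.ofReal (Mom n ν m i (v + 1) j) := by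
            rw [lintegral_mul_const]
            refine ENNReal.measurable_ofReal.comp ?_
            fun_prop
        _ = ENNReal.ofReal (Real.Gamma s * Real.Gamma t / Real.Gamma (s + t)) *
              ENNReal.ofReal (Mom n ν m i (v + 1) j) := by
            rw [beta_lintegral hs_pos ht_pos]
        _ = ENNReal.ofReal (Mom n ν m i (v + 2) j) := by
            rw [← ENNReal.ofReal_mul (by positivity)]
            congr 1
            rw [Mom, Mom, Finset.prod_Icc_succ_top (by omega : 2 ≤ v + 2)]
            have hst : s + t = (m (v+2) : ℝ) - n + j := by
              rw [hs_def, ht_def, hK_def]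
              ring
            rw [← hK_def, hst, hs_def, ht_def]
            ring
    have hfin : ∀ᵐ x ∂(volume.restrict (Set.Ioi (0:ℝ))), G x < ⊤ := by
      have h1 := key 1 le_rfl
      simp only [Nat.sub_self, pow_zero, ENNReal.ofReal_one, one_mul] at h1
      exact ae_lt_top hGm (by rw [h1]; exact ENNReal.ofReal_ne_top)
    refine ⟨hWm2, hW2nn, hW2supp, fun j hj => ?_⟩
    calc ∫⁻ x in Set.Ioi (0:ℝ), ENNReal.ofReal (x ^ (j - 1) * wFun n ν m i (v + 1 + 1) x)
        = ∫⁻ x in Set.Ioi (0:ℝ), ENNReal.ofReal (x ^ (j - 1)) * G x := by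
          refine lintegral_congr_ae ?_
          filter_upwards [hfin, ae_restrict_mem measurableSet_Ioi] with x hx hx0
          rw [hW2eq x, ENNReal.ofReal_mul (pow_nonneg (Set.mem_Ioi.mp hx0).le _),
            ENNReal.ofReal_toReal hx.ne]
      _ = ENNReal.ofReal (Mom n ν m i (v + 2) j) := key j hj

/-- the moments of the weight function `w_i^{(L)}`. -/
theorem stmt7 (n L : ℕ) (hn : 1 ≤ n) (hL : 1 ≤ L) (ν m : ℕ → ℕ)
    (hm1 : 2 * n + ν 1 ≤ m 1) (hmj : ∀ j, 2 ≤ j → j ≤ L → n + ν j + 1 ≤ m j)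
    (i : ℕ) (hi1 : 1 ≤ i) (hin : i ≤ n) (j : ℕ) (hj : 1 ≤ j) :
    ∫ x in Set.Ioi (0 : ℝ), x ^ (j - 1) * wFun n ν m i L x =
      Real.Gamma ((ν 1 : ℝ) + i + j - 1) * Real.Gamma ((m 1 : ℝ) - 2 * n - ν 1 + 1) /
          Real.Gamma ((m 1 : ℝ) - 2 * n + i + j) *
        ∏ k ∈ Finset.Icc 2 L,
          Real.Gamma ((ν k : ℝ) + j) * Real.Gamma ((m k : ℝ) - n - ν k) /
            Real.Gamma ((m k : ℝ) - n + j) := by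
  obtain ⟨hWm, hWnn, hWsupp, hWmom⟩ := master n ν m i hi1 hm1 L hL hmj
  have hMnn : 0 ≤ Mom n ν m i L j := by
    have hi1' : (1:ℝ) ≤ i := by exact_mod_cast hi1
    have hj1' : (1:ℝ) ≤ j := by exact_mod_cast hj
    have hm1' : (2 * n + ν 1 : ℝ) ≤ m 1 := by exact_mod_cast hm1
    push_cast at hm1'
    have hν1 : (0:ℝ) ≤ ν 1 := Nat.cast_nonneg _
    rw [Mom]
    have h1 : 0 < Real.Gamma ((ν 1 : ℝ) + i + j - 1) := Real.Gamma_pos_of_pos (by linarith)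
    have h2 : 0 < Real.Gamma ((m 1 : ℝ) - 2 * n - ν 1 + 1) := Real.Gamma_pos_of_pos (by linarith)
    have h3 : 0 < Real.Gamma ((m 1 : ℝ) - 2 * n + i + j) := Real.Gamma_pos_of_pos (by linarith)
    refine mul_nonneg (by positivity) (Finset.prod_nonneg fun k hk => ?_)
    obtain ⟨hk2, hkL⟩ := Finset.mem_Icc.mp hk
    have hmk : (n + ν k + 1 : ℝ) ≤ m k := by exact_mod_cast hmj k hk2 hkL
    push_cast at hmk
    have hνk : (0:ℝ) ≤ ν k := Nat.cast_nonneg _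
    have g1 : 0 < Real.Gamma ((ν k : ℝ) + j) := Real.Gamma_pos_of_pos (by linarith)
    have g2 : 0 < Real.Gamma ((m k : ℝ) - n - ν k) := Real.Gamma_pos_of_pos (by linarith)
    have g3 : 0 < Real.Gamma ((m k : ℝ) - n + j) := Real.Gamma_pos_of_pos (by linarith)
    positivity
  rw [integral_eq_lintegral_of_nonneg_ae ?_ ?_]
  · rw [hWmom j hj, ENNReal.toReal_ofReal hMnn]
    rfl
  · filter_upwards [ae_restrict_mem measurableSet_Ioi] with x hx
    exact mul_nonneg (pow_nonneg (Set.mem_Ioi.mp hx).le _) (hWnn x)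
  · exact ((measurable_id.pow_const _).mul hWm).aestronglyMeasurable
end

section
/- Let k ≥ 0, ν ≥ 0, M ≥ ν be integers and let u > 0 be a real number. Then Σ_{j=0}^k [(−1)^{k−j} / ((k−j)! · j!)] · [Γ(M+j+k+1)/Γ(ν+1+j)] · [Γ(ν+j+u)/Γ(M+j+u+1)] = [(−1)^k / k!] · [Γ(u+ν)/Γ(1+ν)] · [Γ(M+k+1)/Γ(M+u+1)] · [(u−k)_k · (ν−M−k)_k] / [(1+ν)_k · (u+M+1)_k], where (a)_k = a(a+1)⋯(a+k−1) denotes the Pochhammer symbol (with (a)_0 = 1). -/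
open Finset Real

/-- Pochhammer symbol `(a)_k = a (a+1) ⋯ (a+k-1)` (with `(a)_0 = 1`). -/
noncomputable def poch (a : ℝ) (k : ℕ) : ℝ := ∏ i ∈ Finset.range k, (a + i)

section stmt9helpers
open Polynomial

lemma poch_add (x : ℝ) (a b : ℕ) : poch x (a + b) = poch x a * poch (x + a) b := by
  unfold poch
  rw [Finset.prod_range_add]
  congr 1
  refine Finset.prod_congr rfl fun i _ => ?_
  push_cast; ring

lemma poch_pos {x : ℝ} (hx : 0 < x) (n : ℕ) : 0 < poch x n := by
  unfold poch
  exact Finset.prod_pos fun i _ => by positivity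

lemma fact_prod (a m : ℕ) :
    ((Nat.factorial (a + m) : ℝ)) = (Nat.factorial a : ℝ) * ∏ i ∈ range m, ((a : ℝ) + 1 + i) := by
  induction m with
  | zero => simp
  | succ m ih =>
      rw [Finset.prod_range_succ, ← mul_assoc, ← ih]
      have : a + (m + 1) = (a + m) + 1 := by omega
      rw [this, Nat.factorial_succ]
      push_cast; ring


lemma neg_one_pow_sub {k j : ℕ} (h : j ≤ k) :
    ((-1 : ℝ)) ^ (k - j) = (-1) ^ k * (-1) ^ j := by
  have : k - j + j = k := Nat.sub_add_cancel h
  calc ((-1 : ℝ)) ^ (k - j) = (-1) ^ (k - j) * ((-1) ^ j * (-1) ^ j) := by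
        rw [← pow_add, ← two_mul, pow_mul]; norm_num
    _ = (-1) ^ (k - j + j) * (-1) ^ j := by rw [pow_add]; ring
    _ = (-1) ^ k * (-1) ^ j := by rw [this]

lemma lemA_step (k : ℕ) (f : ℕ → ℝ) :
    ∑ j ∈ range (k + 2), (-1 : ℝ) ^ (k + 1 - j) * ((k+1).choose j) * f j
      = ∑ j ∈ range (k + 1), (-1 : ℝ) ^ (k - j) * (k.choose j) * (f (j+1) - f j) := by
  have T1 : ∑ j ∈ range (k + 1), (-1 : ℝ) ^ j * (k.choose j) * f j
      = f 0 + ∑ j ∈ range k, (-1 : ℝ) ^ (j+1) * (k.choose (j+1)) * f (j+1) := by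
    rw [Finset.sum_range_succ' (fun j => (-1 : ℝ) ^ j * (k.choose j) * f j) k]
    simp [add_comm]
  have S : ∑ j ∈ range (k + 2), (-1 : ℝ) ^ j * ((k+1).choose j) * f j
      = ∑ j ∈ range (k + 1), (-1 : ℝ) ^ j * (k.choose j) * f j
        - ∑ j ∈ range (k + 1), (-1 : ℝ) ^ j * (k.choose j) * f (j+1) := by
    rw [Finset.sum_range_succ' (fun j => (-1 : ℝ) ^ j * ((k+1).choose j) * f j) (k+1)]
    have hsplit : ∀ j, ((k+1).choose (j+1) : ℝ) = (k.choose j : ℝ) + (k.choose (j+1) : ℝ) := by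
      intro j; rw [Nat.choose_succ_succ]; push_cast; ring
    have : ∑ j ∈ range (k + 1), (-1 : ℝ) ^ (j+1) * ((k+1).choose (j+1)) * f (j+1)
        = -∑ j ∈ range (k + 1), (-1 : ℝ) ^ j * (k.choose j) * f (j+1)
          + ∑ j ∈ range (k + 1), (-1 : ℝ) ^ (j+1) * (k.choose (j+1)) * f (j+1) := by
      rw [← Finset.sum_neg_distrib, ← Finset.sum_add_distrib]
      refine Finset.sum_congr rfl fun j _ => ?_
      rw [hsplit]; ring
    rw [this]
    have hlast : ∑ j ∈ range (k + 1), (-1 : ℝ) ^ (j+1) * (k.choose (j+1)) * f (j+1)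
        = ∑ j ∈ range k, (-1 : ℝ) ^ (j+1) * (k.choose (j+1)) * f (j+1) := by
      rw [Finset.sum_range_succ]; simp
    rw [hlast, T1]; simp; ring
  calc ∑ j ∈ range (k + 2), (-1 : ℝ) ^ (k + 1 - j) * ((k+1).choose j) * f j
      = ∑ j ∈ range (k + 2), (-1 : ℝ) ^ (k+1) * ((-1 : ℝ) ^ j * ((k+1).choose j) * f j) := by
        refine Finset.sum_congr rfl fun j hj => ?_
        rw [neg_one_pow_sub (Nat.lt_succ_iff.mp (Finset.mem_range.mp hj))]; ring
    _ = (-1 : ℝ) ^ (k+1) * ∑ j ∈ range (k + 2), (-1 : ℝ) ^ j * ((k+1).choose j) * f j := by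
        rw [Finset.mul_sum]
    _ = ∑ j ∈ range (k + 1), (-1 : ℝ) ^ (k - j) * (k.choose j) * (f (j+1) - f j) := by
        rw [S, mul_sub, Finset.mul_sum, Finset.mul_sum, ← Finset.sum_sub_distrib]
        refine Finset.sum_congr rfl fun j hj => ?_
        rw [neg_one_pow_sub (Nat.lt_succ_iff.mp (Finset.mem_range.mp hj))]
        ring


lemma L1 : ∀ (k : ℕ) (q : Polynomial ℝ), q.natDegree < k →
    ∑ j ∈ range (k + 1), (-1 : ℝ) ^ (k - j) * (k.choose j) * q.eval (j : ℝ) = 0 := by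
  intro k
  induction k with
  | zero => intro q hq; omega
  | succ k ih =>
      intro q hq
      rw [lemA_step k (fun j => q.eval (j : ℝ))]
      set Δq : Polynomial ℝ := q.comp (X + C 1) - q with hΔ
      have heval : ∀ j : ℕ, q.eval ((j : ℝ) + 1) - q.eval (j : ℝ) = Δq.eval (j : ℝ) := by
        intro j; simp [hΔ, eval_comp]
      have hstep : ∑ j ∈ range (k + 1), (-1 : ℝ) ^ (k - j) * (k.choose j) * (q.eval ((j+1 : ℕ) : ℝ) - q.eval (j : ℝ))
          = ∑ j ∈ range (k + 1), (-1 : ℝ) ^ (k - j) * (k.choose j) * Δq.eval (j : ℝ) := by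
        refine Finset.sum_congr rfl fun j _ => ?_
        rw [← heval]; push_cast; ring_nf
      rw [hstep]
      rcases Nat.eq_zero_or_pos q.natDegree with h0 | hpos
      · -- q is a constant
        obtain ⟨a, rfl⟩ := Polynomial.natDegree_eq_zero.mp h0
        have : Δq = 0 := by simp [hΔ]
        simp [this]
      · -- natDegree Δq < natDegree q ≤ k
        have hqne : q ≠ 0 := fun h => by simp [h] at hpos
        have hcompdeg : (q.comp (X + C 1)).natDegree = q.natDegree := by
          rw [Polynomial.natDegree_comp, Polynomial.natDegree_X_add_C]; ring
        have hcompne : q.comp (X + C 1) ≠ 0 := by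
          intro h
          have := hcompdeg
          rw [h] at this
          simp at this
          omega
        have hlc : (q.comp (X + C 1)).leadingCoeff = q.leadingCoeff := by
          rw [Polynomial.leadingCoeff_comp (by rw [Polynomial.natDegree_X_add_C]; omega)]
          rw [(Polynomial.monic_X_add_C (1:ℝ)).leadingCoeff]
          ring
        have hdeg : (q.comp (X + C 1)).degree = q.degree := by
          rw [Polynomial.degree_eq_natDegree hqne, Polynomial.degree_eq_natDegree hcompne, hcompdeg]
        have hlt : Δq.degree < q.degree := by
          rw [hΔ]
          exact (Polynomial.degree_sub_lt hdeg hcompne hlc).trans_eq hdeg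
        rcases eq_or_ne Δq 0 with h | h
        · simp [h]
        · have : Δq.natDegree < q.natDegree :=
            Polynomial.natDegree_lt_natDegree h hlt
          exact ih Δq (by omega)

lemma sum2 : ∀ (k m : ℕ), k ≤ m → ∀ (c : ℝ),
    ∑ j ∈ range (k + 1), (-1 : ℝ) ^ (k - j) * (k.choose j) * ∏ i ∈ range m, (c + j + i)
      = (∏ i ∈ range k, ((m : ℝ) - i)) * ∏ i ∈ range (m - k), (c + k + i) := by
  intro k
  induction k with
  | zero => intro m _ c; simp
  | succ k ih =>
      intro m hm c
      obtain ⟨m', rfl⟩ : ∃ m', m = m' + 1 := ⟨m - 1, by omega⟩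
      rw [lemA_step k (fun j => ∏ i ∈ range (m' + 1), (c + j + i))]
      have hdiff : ∀ j : ℕ, (∏ i ∈ range (m' + 1), (c + (j+1 : ℕ) + i)) - ∏ i ∈ range (m' + 1), (c + j + i)
          = ((m' : ℝ) + 1) * ∏ i ∈ range m', ((c + 1) + j + i) := by
        intro j
        have e1 : ∏ i ∈ range (m' + 1), (c + (j+1 : ℕ) + i)
            = (c + j + 1 + m') * ∏ i ∈ range m', (c + 1 + j + i) := by
          rw [Finset.prod_range_succ]
          push_cast
          have h : ∏ i ∈ range m', (c + ((j:ℝ) + 1) + i) = ∏ i ∈ range m', (c + 1 + j + i) :=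
            Finset.prod_congr rfl fun i _ => by ring
          rw [h]; ring
        have e2 : ∏ i ∈ range (m' + 1), (c + j + i)
            = (c + j) * ∏ i ∈ range m', (c + 1 + j + i) := by
          rw [Finset.prod_range_succ' (fun i => (c + (j:ℝ) + i)) m']
          push_cast
          have h : ∏ i ∈ range m', (c + (j:ℝ) + ((i:ℝ) + 1)) = ∏ i ∈ range m', (c + 1 + j + i) :=
            Finset.prod_congr rfl fun i _ => by ring
          rw [h]; ring
        rw [e1, e2, ← sub_mul]
        congr 1
        · ring
      have : ∑ j ∈ range (k + 1), (-1 : ℝ) ^ (k - j) * (k.choose j) *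
            ((∏ i ∈ range (m' + 1), (c + (j+1 : ℕ) + i)) - ∏ i ∈ range (m' + 1), (c + j + i))
          = ((m' : ℝ) + 1) * ∑ j ∈ range (k + 1), (-1 : ℝ) ^ (k - j) * (k.choose j) *
              ∏ i ∈ range m', ((c + 1) + j + i) := by
        rw [Finset.mul_sum]
        refine Finset.sum_congr rfl fun j _ => ?_
        rw [hdiff j]; ring
      rw [this, ih m' (by omega) (c + 1)]
      have hA : ∏ i ∈ range (k+1), (((m'+1 : ℕ) : ℝ) - (i : ℕ))
          = ((m' : ℝ) + 1) * ∏ i ∈ range k, ((m' : ℝ) - i) := by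
        rw [Finset.prod_range_succ' (fun i => (((m'+1 : ℕ) : ℝ) - (i : ℕ))) k]
        push_cast
        have h : ∏ i ∈ range k, ((m' : ℝ) + 1 - ((i:ℝ) + 1)) = ∏ i ∈ range k, ((m' : ℝ) - i) :=
          Finset.prod_congr rfl fun i _ => by ring
        rw [h]; ring
      have hB : ∏ i ∈ range (m' + 1 - (k + 1)), (c + ((k+1 : ℕ) : ℝ) + (i : ℕ))
          = ∏ i ∈ range (m' - k), (c + 1 + (k : ℝ) + i) := by
        have hmk : m' + 1 - (k + 1) = m' - k := by omega
        rw [hmk]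
        exact Finset.prod_congr rfl fun i _ => by push_cast; ring
      rw [hA, hB]
      ring


lemma evalvanish (k ν d s : ℕ) (hs : s < k) :
    ∑ j ∈ range (k + 1), (-1 : ℝ) ^ (k - j) * (k.choose j) *
        (∏ i ∈ range (d + k), ((ν : ℝ) + 1 + j + i)) *
        ((∏ i ∈ range j, (((ν : ℝ) + 1 + s) + i)) *
          ∏ i ∈ range (k - j), (((ν : ℝ) + 1 + s) + ((d : ℝ) + 1 + j + i))) = 0 := by
  set q : Polynomial ℝ :=
    (∏ i ∈ range s, (X + C ((ν : ℝ) + 1 + i))) *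
      ∏ i ∈ range (k - 1 - s), (X + C ((ν : ℝ) + s + d + 2 + i)) with hq
  have hmon1 : (∏ i ∈ range s, (X + C ((ν : ℝ) + 1 + i))).Monic :=
    monic_prod_of_monic _ _ fun i _ => monic_X_add_C _
  have hmon2 : (∏ i ∈ range (k - 1 - s), (X + C ((ν : ℝ) + s + d + 2 + i))).Monic :=
    monic_prod_of_monic _ _ fun i _ => monic_X_add_C _
  have hd1 : (∏ i ∈ range s, (X + C ((ν : ℝ) + 1 + i))).natDegree = s := by
    rw [Polynomial.natDegree_prod_of_monic _ _ fun i _ => monic_X_add_C _]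
    simp only [Polynomial.natDegree_X_add_C, Finset.sum_const, smul_eq_mul, mul_one,
      Finset.card_range]
  have hd2 : (∏ i ∈ range (k - 1 - s), (X + C ((ν : ℝ) + s + d + 2 + i))).natDegree = k - 1 - s := by
    rw [Polynomial.natDegree_prod_of_monic _ _ fun i _ => monic_X_add_C _]
    simp only [Polynomial.natDegree_X_add_C, Finset.sum_const, smul_eq_mul, mul_one,
      Finset.card_range]
  have hqdeg : q.natDegree < k := by
    have := Polynomial.natDegree_mul_le (p := (∏ i ∈ range s, (X + C ((ν : ℝ) + 1 + i))))
      (q := ∏ i ∈ range (k - 1 - s), (X + C ((ν : ℝ) + s + d + 2 + i)))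
    rw [hd1, hd2] at this
    rw [hq]
    omega
  have hL1 := L1 k q hqdeg
  have hevalq : ∀ j : ℕ, q.eval (j : ℝ)
      = (∏ i ∈ range s, ((ν : ℝ) + 1 + j + i)) *
        ∏ i ∈ range (k - 1 - s), ((ν : ℝ) + s + d + 2 + j + i) := by
    intro j
    rw [hq]
    simp only [Polynomial.eval_mul, Polynomial.eval_prod, Polynomial.eval_add,
      Polynomial.eval_X, Polynomial.eval_C]
    congr 1
    · exact Finset.prod_congr rfl fun i _ => by ring
    · exact Finset.prod_congr rfl fun i _ => by ring
  have key : ∀ j ∈ range (k + 1),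
      (-1 : ℝ) ^ (k - j) * (k.choose j) *
        (∏ i ∈ range (d + k), ((ν : ℝ) + 1 + j + i)) *
        ((∏ i ∈ range j, (((ν : ℝ) + 1 + s) + i)) *
          ∏ i ∈ range (k - j), (((ν : ℝ) + 1 + s) + ((d : ℝ) + 1 + j + i)))
      = poch ((ν : ℝ) + 1 + s) (d + k + 1) *
          ((-1 : ℝ) ^ (k - j) * (k.choose j) * q.eval (j : ℝ)) := by
    intro j hj
    have hjk : j ≤ k := Nat.lt_succ_iff.mp (Finset.mem_range.mp hj)
    rw [hevalq j]
    -- rewrite all products as poch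
    have pA : ∏ i ∈ range (d + k), ((ν : ℝ) + 1 + j + i) = poch ((ν : ℝ) + 1 + j) (d + k) := rfl
    have pB : ∏ i ∈ range j, (((ν : ℝ) + 1 + s) + i) = poch ((ν : ℝ) + 1 + s) j := rfl
    have pC : ∏ i ∈ range (k - j), (((ν : ℝ) + 1 + s) + ((d : ℝ) + 1 + j + i))
        = poch ((ν : ℝ) + 1 + s + (d + 1 + j)) (k - j) := by
      refine Finset.prod_congr rfl fun i _ => by push_cast; ring
    have pD : ∏ i ∈ range s, ((ν : ℝ) + 1 + j + i) = poch ((ν : ℝ) + 1 + j) s := rfl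
    have pE : ∏ i ∈ range (k - 1 - s), ((ν : ℝ) + s + d + 2 + j + i)
        = poch ((ν : ℝ) + 1 + j + s + (d + 1)) (k - 1 - s) := by
      refine Finset.prod_congr rfl fun i _ => by push_cast; ring
    rw [pA, pB, pC, pD, pE]
    have hA : poch ((ν : ℝ) + 1 + j) (d + k)
        = poch ((ν : ℝ) + 1 + j) s * poch ((ν : ℝ) + 1 + j + s) (d + 1) *
            poch ((ν : ℝ) + 1 + j + s + (d + 1)) (k - 1 - s) := by
      rw [show d + k = s + ((d + 1) + (k - 1 - s)) by omega, poch_add, poch_add]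
      push_cast
      ring
    have hB : poch ((ν : ℝ) + 1 + s) (d + k + 1)
        = poch ((ν : ℝ) + 1 + s) j * poch ((ν : ℝ) + 1 + s + j) (d + 1) *
            poch ((ν : ℝ) + 1 + s + (d + 1 + j)) (k - j) := by
      rw [show d + k + 1 = j + ((d + 1) + (k - j)) by omega, poch_add, poch_add]
      push_cast
      ring_nf
    rw [hA, hB]
    rw [show (ν : ℝ) + 1 + j + s = (ν : ℝ) + 1 + s + j by ring]
    ring
  rw [Finset.sum_congr rfl key, ← Finset.mul_sum, hL1, mul_zero]


lemma corePoly (k ν d : ℕ) (x : ℝ) :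
    ∑ j ∈ range (k + 1), (-1 : ℝ) ^ (k - j) * (k.choose j) *
        (∏ i ∈ range (d + k), ((ν : ℝ) + 1 + j + i)) *
        ((∏ i ∈ range j, (x + i)) * ∏ i ∈ range (k - j), (x + ((d : ℝ) + 1 + j + i)))
      = ((∏ i ∈ range k, ((d : ℝ) + k - i)) * ∏ i ∈ range d, ((ν : ℝ) + 1 + k + i)) *
          ∏ t ∈ range k, (x - ((ν : ℝ) + 1 + t)) := by
  set cL : ℕ → ℝ := fun j => (-1 : ℝ) ^ (k - j) * (k.choose j) *
      ∏ i ∈ range (d + k), ((ν : ℝ) + 1 + j + i) with hcL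
  set cR : ℝ := (∏ i ∈ range k, ((d : ℝ) + k - i)) * ∏ i ∈ range d, ((ν : ℝ) + 1 + k + i) with hcR
  set L : Polynomial ℝ := ∑ j ∈ range (k + 1), C (cL j) *
      ((∏ i ∈ range j, (X + C (i : ℝ))) *
        ∏ i ∈ range (k - j), (X + C ((d : ℝ) + 1 + j + i))) with hL
  set R : Polynomial ℝ := C cR * ∏ t ∈ range k, (X - C ((ν : ℝ) + 1 + t)) with hR
  -- evaluation formulas
  have evalL : ∀ y : ℝ, L.eval y = ∑ j ∈ range (k + 1), cL j *
      ((∏ i ∈ range j, (y + i)) * ∏ i ∈ range (k - j), (y + ((d : ℝ) + 1 + j + i))) := by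
    intro y
    rw [hL, Polynomial.eval_finset_sum]
    exact Finset.sum_congr rfl fun j _ => by
      simp [Polynomial.eval_prod]
  have evalR : ∀ y : ℝ, R.eval y = cR * ∏ t ∈ range k, (y - ((ν : ℝ) + 1 + t)) := by
    intro y
    rw [hR]
    simp [Polynomial.eval_prod]
  -- monicity and degrees of the building blocks
  have hmon : ∀ j, ((∏ i ∈ range j, (X + C (i : ℝ))) *
      ∏ i ∈ range (k - j), (X + C ((d : ℝ) + 1 + j + i))).Monic := fun j =>
    (monic_prod_of_monic _ _ fun i _ => monic_X_add_C _).mul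
      (monic_prod_of_monic _ _ fun i _ => monic_X_add_C _)
  have hdeg : ∀ j ∈ range (k + 1), ((∏ i ∈ range j, (X + C (i : ℝ))) *
      ∏ i ∈ range (k - j), (X + C ((d : ℝ) + 1 + j + i))).natDegree = k := by
    intro j hj
    have hjk : j ≤ k := Nat.lt_succ_iff.mp (Finset.mem_range.mp hj)
    rw [Polynomial.Monic.natDegree_mul (monic_prod_of_monic _ _ fun i _ => monic_X_add_C _)
      (monic_prod_of_monic _ _ fun i _ => monic_X_add_C _)]
    rw [Polynomial.natDegree_prod_of_monic _ _ fun i _ => monic_X_add_C _,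
      Polynomial.natDegree_prod_of_monic _ _ fun i _ => monic_X_add_C _]
    simp only [Polynomial.natDegree_X_add_C, Finset.sum_const, smul_eq_mul, mul_one,
      Finset.card_range]
    omega
  have hmonR : (∏ t ∈ range k, (X - C ((ν : ℝ) + 1 + t))).Monic :=
    monic_prod_of_monic _ _ fun t _ => monic_X_sub_C _
  have hdegR : (∏ t ∈ range k, (X - C ((ν : ℝ) + 1 + t))).natDegree = k := by
    rw [Polynomial.natDegree_prod_of_monic _ _ fun t _ => monic_X_sub_C _]
    simp only [Polynomial.natDegree_X_sub_C, Finset.sum_const, smul_eq_mul, mul_one,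
      Finset.card_range]
  set P : Polynomial ℝ := L - R with hP
  have hPdeg : P.natDegree ≤ k := by
    refine (Polynomial.natDegree_sub_le _ _).trans (max_le ?_ ?_)
    · refine Polynomial.natDegree_sum_le_of_forall_le _ _ fun j hj => ?_
      refine (Polynomial.natDegree_mul_le).trans ?_
      rw [Polynomial.natDegree_C, hdeg j hj]
      omega
    · refine (Polynomial.natDegree_mul_le).trans ?_
      rw [Polynomial.natDegree_C, hdegR]
      omega
  have hPcoeff : P.coeff k = 0 := by
    rw [hP, Polynomial.coeff_sub]
    have hLc : L.coeff k = ∑ j ∈ range (k + 1), cL j := by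
      rw [hL, Polynomial.finset_sum_coeff]
      refine Finset.sum_congr rfl fun j hj => ?_
      rw [Polynomial.coeff_C_mul]
      have h1 := (hmon j).coeff_natDegree
      rw [hdeg j hj] at h1
      rw [h1, mul_one]
    have hRc : R.coeff k = cR := by
      rw [hR, Polynomial.coeff_C_mul]
      have h1 := hmonR.coeff_natDegree
      rw [hdegR] at h1
      rw [h1, mul_one]
    rw [hLc, hRc, hcR]
    have := sum2 k (d + k) (by omega) ((ν : ℝ) + 1)
    rw [Nat.add_sub_cancel] at this
    rw [hcL]
    rw [this]
    have e1 : ∏ i ∈ range k, (((d + k : ℕ) : ℝ) - i) = ∏ i ∈ range k, ((d : ℝ) + k - i) :=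
      Finset.prod_congr rfl fun i _ => by push_cast; ring
    rw [e1, sub_self]
  have hPeval : ∀ s ∈ Finset.image (fun s : ℕ => (ν : ℝ) + 1 + s) (range k), P.eval s = 0 := by
    intro y hy
    obtain ⟨s, hs, rfl⟩ := Finset.mem_image.mp hy
    have hsk : s < k := Finset.mem_range.mp hs
    rw [hP, Polynomial.eval_sub, evalL, evalR]
    rw [Finset.prod_eq_zero hs (by ring)]
    rw [mul_zero, sub_zero]
    have := evalvanish k ν d s hsk
    rw [← this]
  have hP0 : P = 0 := by
    rcases eq_or_ne P 0 with h | h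
    · exact h
    have hlt : P.natDegree < k := by
      rcases lt_or_eq_of_le hPdeg with h' | h'
      · exact h'
      · exfalso
        have : P.leadingCoeff = 0 := by rw [Polynomial.leadingCoeff, h', hPcoeff]
        exact h (Polynomial.leadingCoeff_eq_zero.mp this)
    refine Polynomial.eq_zero_of_natDegree_lt_card_of_eval_eq_zero' P
      (Finset.image (fun s : ℕ => (ν : ℝ) + 1 + s) (range k)) hPeval ?_
    rw [Finset.card_image_of_injective _ (fun a b hab => by
      field_simp at hab; exact_mod_cast add_left_cancel hab)]
    rwa [Finset.card_range]
  have hxx : L.eval x = R.eval x := by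
    have h2 := hP0
    rw [hP, sub_eq_zero] at h2
    rw [h2]
  rw [evalL, evalR] at hxx
  calc ∑ j ∈ range (k + 1), (-1 : ℝ) ^ (k - j) * (k.choose j) *
        (∏ i ∈ range (d + k), ((ν : ℝ) + 1 + j + i)) *
        ((∏ i ∈ range j, (x + i)) * ∏ i ∈ range (k - j), (x + ((d : ℝ) + 1 + j + i)))
      = ∑ j ∈ range (k + 1), cL j *
        ((∏ i ∈ range j, (x + i)) * ∏ i ∈ range (k - j), (x + ((d : ℝ) + 1 + j + i))) := by
        exact Finset.sum_congr rfl fun j _ => by rw [hcL]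
    _ = cR * ∏ t ∈ range k, (x - ((ν : ℝ) + 1 + t)) := hxx


lemma alg1 (kn j : ℕ) (nu Pd gx pj pd1j pkj a b c : ℝ)
    (hnu : nu ≠ 0) (hgx : gx ≠ 0) (ha : a ≠ 0) (hb : b ≠ 0) (hc : c ≠ 0)
    (hpd : pd1j ≠ 0) (hpk : pkj ≠ 0) :
    ((-1 : ℝ) ^ (kn - j) / (a * b)) * ((nu * Pd) / nu) * ((gx * pj) / (gx * pd1j))
      = ((-1 : ℝ) ^ (kn - j) * c * Pd * (pj * pkj)) / ((c * b * a) * (pd1j * pkj)) := by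
  field_simp

lemma alg2 (kn : ℕ) (kf nf gx Qd pd1 Pk Dk pp pxk : ℝ)
    (hkf : kf ≠ 0) (hnf : nf ≠ 0) (hgx : gx ≠ 0) (hpd1 : pd1 ≠ 0)
    (hpp : pp ≠ 0) (hpxk : pxk ≠ 0) :
    ((-1 : ℝ) ^ kn / kf) * (gx / nf) * ((nf * pp * Qd) / (gx * pd1)) *
        (Pk * ((-1 : ℝ) ^ kn * Dk)) / (pp * pxk)
      = ((Dk * Qd) * Pk) / (kf * (pd1 * pxk)) := by
  have he : ((-1 : ℝ) ^ kn) * ((-1 : ℝ) ^ kn) = 1 := by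
    rw [← pow_add, ← two_mul, pow_mul]; norm_num
  field_simp
  linear_combination (Qd * Pk * Dk) * he


lemma Gamma_shift {x : ℝ} (hx : 0 < x) (n : ℕ) :
    Real.Gamma (x + n) = Real.Gamma x * poch x n := by
  induction n with
  | zero => simp [poch]
  | succ n ih =>
      have h : x + ((n : ℕ) + 1 : ℕ) = (x + n) + 1 := by push_cast; ring
      rw [h, Real.Gamma_add_one (by positivity : (0:ℝ) < x + n).ne', ih]
      unfold poch
      rw [Finset.prod_range_succ]
      ring


end stmt9helpers

/-- the Pfaff–Saalschütz-type evaluation used to compute `Q_{s,k}`. -/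
theorem stmt9 (k ν M : ℕ) (hM : ν ≤ M) (u : ℝ) (hu : 0 < u) :
    ∑ j ∈ Finset.range (k + 1),
        ((-1 : ℝ) ^ (k - j) / ((Nat.factorial (k - j) : ℝ) * (Nat.factorial j : ℝ))) *
          (Real.Gamma ((M : ℝ) + j + k + 1) / Real.Gamma ((ν : ℝ) + 1 + j)) *
          (Real.Gamma ((ν : ℝ) + j + u) / Real.Gamma ((M : ℝ) + j + u + 1)) =
      ((-1 : ℝ) ^ k / (Nat.factorial k : ℝ)) *
        (Real.Gamma (u + ν) / Real.Gamma (1 + ν)) *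
        (Real.Gamma ((M : ℝ) + k + 1) / Real.Gamma ((M : ℝ) + u + 1)) *
        (poch (u - k) k * poch ((ν : ℝ) - M - k) k) /
          (poch (1 + ν) k * poch (u + (M : ℝ) + 1) k) := by
  obtain ⟨d, rfl⟩ : ∃ d, M = ν + d := ⟨M - ν, by omega⟩
  have hx0 : (0:ℝ) < u + ν := by positivity
  have hGx : Real.Gamma (u + (ν : ℝ)) ≠ 0 := (Real.Gamma_pos_of_pos hx0).ne'
  have hden : poch (u + (ν : ℝ)) (d + 1 + k)
      = poch (u + (ν : ℝ)) (d + 1) * poch ((u + (ν : ℝ)) + ((d + 1 : ℕ) : ℝ)) k := by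
    rw [show d + 1 + k = (d + 1) + k from rfl, poch_add]
  -- Step 1: LHS rewrite
  have lhs_eq : ∀ j ∈ range (k + 1),
      ((-1 : ℝ) ^ (k - j) / ((Nat.factorial (k - j) : ℝ) * (Nat.factorial j : ℝ))) *
          (Real.Gamma (((ν + d : ℕ) : ℝ) + j + k + 1) / Real.Gamma ((ν : ℝ) + 1 + j)) *
          (Real.Gamma ((ν : ℝ) + j + u) / Real.Gamma (((ν + d : ℕ) : ℝ) + j + u + 1))
        = ((-1 : ℝ) ^ (k - j) * (k.choose j) *
            (∏ i ∈ range (d + k), ((ν : ℝ) + 1 + j + i)) *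
            ((∏ i ∈ range j, ((u + (ν : ℝ)) + i)) *
              ∏ i ∈ range (k - j), ((u + (ν : ℝ)) + ((d : ℝ) + 1 + j + i))))
          / ((Nat.factorial k : ℝ) * poch (u + (ν : ℝ)) (d + 1 + k)) := by
    intro j hj
    have hjk : j ≤ k := Nat.lt_succ_iff.mp (Finset.mem_range.mp hj)
    have g1 : Real.Gamma (((ν + d : ℕ) : ℝ) + j + k + 1)
        = ((Nat.factorial (ν + j) : ℝ)) * ∏ i ∈ range (d + k), ((ν : ℝ) + 1 + j + i) := by
      have h : ((ν + d : ℕ) : ℝ) + j + k + 1 = (((ν + j) + (d + k) : ℕ) : ℝ) + 1 := by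
        push_cast; ring
      rw [h, Real.Gamma_nat_eq_factorial, fact_prod (ν + j) (d + k)]
      congr 1
      exact Finset.prod_congr rfl fun i _ => by push_cast; ring
    have g2 : Real.Gamma ((ν : ℝ) + 1 + j) = (Nat.factorial (ν + j) : ℝ) := by
      have h : (ν : ℝ) + 1 + j = (((ν + j) : ℕ) : ℝ) + 1 := by push_cast; ring
      rw [h, Real.Gamma_nat_eq_factorial]
    have g3 : Real.Gamma ((ν : ℝ) + j + u)
        = Real.Gamma (u + (ν : ℝ)) * poch (u + (ν : ℝ)) j := by
      have h : (ν : ℝ) + j + u = (u + (ν : ℝ)) + (j : ℕ) := by push_cast; ring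
      rw [h, Gamma_shift hx0]
    have g4 : Real.Gamma (((ν + d : ℕ) : ℝ) + j + u + 1)
        = Real.Gamma (u + (ν : ℝ)) * poch (u + (ν : ℝ)) (d + 1 + j) := by
      have h : ((ν + d : ℕ) : ℝ) + j + u + 1 = (u + (ν : ℝ)) + ((d + 1 + j : ℕ) : ℝ) := by
        push_cast; ring
      rw [h, Gamma_shift hx0]
    have hsplit : poch (u + (ν : ℝ)) (d + 1 + k)
        = poch (u + (ν : ℝ)) (d + 1 + j) *
            poch ((u + (ν : ℝ)) + ((d + 1 + j : ℕ) : ℝ)) (k - j) := by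
      rw [show d + 1 + k = (d + 1 + j) + (k - j) by omega, poch_add]
    have hprodC : ∏ i ∈ range (k - j), ((u + (ν : ℝ)) + ((d : ℝ) + 1 + j + i))
        = poch ((u + (ν : ℝ)) + ((d + 1 + j : ℕ) : ℝ)) (k - j) := by
      refine Finset.prod_congr rfl fun i _ => by push_cast; ring
    have hprodB : ∏ i ∈ range j, ((u + (ν : ℝ)) + i) = poch (u + (ν : ℝ)) j := rfl
    have hfact : (Nat.factorial k : ℝ)
        = (k.choose j : ℝ) * (Nat.factorial j : ℝ) * (Nat.factorial (k - j) : ℝ) := by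
      rw [← Nat.choose_mul_factorial_mul_factorial hjk]; push_cast; ring
    rw [g1, g2, g3, g4, hprodB, hprodC, hsplit, hfact]
    exact alg1 k j _ _ _ _ _ _ _ _ _
      (Nat.cast_ne_zero.mpr (Nat.factorial_ne_zero _)) hGx
      (Nat.cast_ne_zero.mpr (Nat.factorial_ne_zero _))
      (Nat.cast_ne_zero.mpr (Nat.factorial_ne_zero _))
      (Nat.cast_ne_zero.mpr (Nat.choose_pos hjk).ne')
      (poch_pos hx0 _).ne' (poch_pos (by positivity) _).ne'
  rw [Finset.sum_congr rfl lhs_eq, ← Finset.sum_div, corePoly k ν d (u + (ν : ℝ))]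
  -- Step 2: RHS rewrite
  have g5 : Real.Gamma (1 + (ν : ℝ)) = (Nat.factorial ν : ℝ) := by
    rw [show (1 : ℝ) + ν = (ν : ℝ) + 1 by ring, Real.Gamma_nat_eq_factorial]
  have g6 : Real.Gamma (((ν + d : ℕ) : ℝ) + k + 1)
      = (Nat.factorial (ν + k) : ℝ) * ∏ i ∈ range d, ((ν : ℝ) + 1 + k + i) := by
    have h : ((ν + d : ℕ) : ℝ) + k + 1 = (((ν + k) + d : ℕ) : ℝ) + 1 := by push_cast; ring
    rw [h, Real.Gamma_nat_eq_factorial, fact_prod (ν + k) d]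
    congr 1
    exact Finset.prod_congr rfl fun i _ => by push_cast; ring
  have g7 : Real.Gamma (((ν + d : ℕ) : ℝ) + u + 1)
      = Real.Gamma (u + (ν : ℝ)) * poch (u + (ν : ℝ)) (d + 1) := by
    have h : ((ν + d : ℕ) : ℝ) + u + 1 = (u + (ν : ℝ)) + ((d + 1 : ℕ) : ℝ) := by push_cast; ring
    rw [h, Gamma_shift hx0]
  have p1 : poch (u - (k : ℝ)) k = ∏ t ∈ range k, ((u + (ν : ℝ)) - ((ν : ℝ) + 1 + t)) := by
    unfold poch
    rw [← Finset.prod_range_reflect (fun i => (u - (k : ℝ) + i)) k]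
    refine Finset.prod_congr rfl fun t ht => ?_
    have htk : t < k := Finset.mem_range.mp ht
    have hc : ((k - 1 - t : ℕ) : ℝ) = (k : ℝ) - 1 - t := by
      have h : k - 1 - t = k - (1 + t) := by omega
      rw [h, Nat.cast_sub (by omega)]
      push_cast; ring
    rw [hc]
    ring
  have p2 : poch ((ν : ℝ) - ((ν + d : ℕ) : ℝ) - k) k
      = (-1 : ℝ) ^ k * ∏ i ∈ range k, ((d : ℝ) + k - i) := by
    unfold poch
    have h : ∏ i ∈ range k, ((ν : ℝ) - ((ν + d : ℕ) : ℝ) - k + i)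
        = ∏ i ∈ range k, ((-1 : ℝ) * ((d : ℝ) + k - i)) :=
      Finset.prod_congr rfl fun i _ => by push_cast; ring
    rw [h, Finset.prod_mul_distrib, Finset.prod_const, Finset.card_range]
  have p3 : poch (1 + (ν : ℝ)) k = (∏ i ∈ range k, ((ν : ℝ) + 1 + i)) := by
    unfold poch
    exact Finset.prod_congr rfl fun i _ => by ring
  have p4 : poch (u + ((ν + d : ℕ) : ℝ) + 1) k
      = poch ((u + (ν : ℝ)) + ((d + 1 : ℕ) : ℝ)) k := by
    have h : u + ((ν + d : ℕ) : ℝ) + 1 = (u + (ν : ℝ)) + ((d + 1 : ℕ) : ℝ) := by push_cast; ring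
    rw [h]
  have hfk : (Nat.factorial (ν + k) : ℝ)
      = (Nat.factorial ν : ℝ) * ∏ i ∈ range k, ((ν : ℝ) + 1 + i) := fact_prod ν k
  rw [g5, g6, g7, p1, p2, p3, p4, hden, hfk]
  exact (alg2 k _ _ _ _ _ _ _ _ _
    (Nat.cast_ne_zero.mpr (Nat.factorial_ne_zero _))
    (Nat.cast_ne_zero.mpr (Nat.factorial_ne_zero _))
    hGx (poch_pos hx0 _).ne'
    (Finset.prod_ne_zero_iff.mpr fun i _ => by positivity)
    (poch_pos (by positivity) _).ne').symm
end

section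
/- Fix reals 0 < a_1 < a_2 < 1. Let (q_t) be a sequence in (0,1) with q_t → 1, and let λ_1(t) ≥ λ_2(t) ≥ 0 be integer sequences such that q_t^{λ_1(t)+1} → a_1 and q_t^{λ_2(t)} → a_2. Then P_{q_t}(λ_1(t), λ_2(t)) / ((1−q_t)² · q_t^{λ_1(t)+λ_2(t)+1}) converges to 12·(a_2 − a_1)². That is, under the change of variables q^{λ_1+1} ↦ a_1, q^{λ_2} ↦ a_2, the Schur measure P_q converges as q → 1 to the Jacobi-ensemble density ρ(a_1,a_2) = 12(a_2−a_1)² on {0 ≤ a_1 ≤ a_2 ≤ 1}. -/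
open Filter

/-- The two-variable Schur polynomial
`s_{(l1,l2)}(u,v) = (u^{l1+1} v^{l2} − v^{l1+1} u^{l2})/(u−v)`. -/
noncomputable def s2 (l1 l2 : ℕ) (u v : ℝ) : ℝ :=
  (u ^ (l1 + 1) * v ^ l2 - v ^ (l1 + 1) * u ^ l2) / (u - v)

/-- The Schur-measure weight
`P_q(λ1,λ2) = (1−q)(1−q²)²(1−q³) s_{(λ1,λ2)}(1,q) s_{(λ1,λ2)}(q,q²)`. -/
noncomputable def Pq (q : ℝ) (l1 l2 : ℕ) : ℝ :=
  (1 - q) * (1 - q ^ 2) ^ 2 * (1 - q ^ 3) * s2 l1 l2 1 q * s2 l1 l2 q (q ^ 2)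

/-- the Schur measure `P_q` converges, as `q → 1`, to the Jacobi-ensemble
density `ρ(a1,a2) = 12 (a2−a1)²` under the change of variables `q^{λ1+1} ↦ a1, q^{λ2} ↦ a2`. -/
theorem stmt10 (a1 a2 : ℝ) (ha1 : 0 < a1) (ha12 : a1 < a2) (ha2 : a2 < 1)
    (q : ℕ → ℝ) (hq : ∀ t, 0 < q t ∧ q t < 1)
    (hqlim : Tendsto q atTop (nhds 1))
    (l1 l2 : ℕ → ℕ) (hl : ∀ t, l2 t ≤ l1 t)
    (hlim1 : Tendsto (fun t => q t ^ (l1 t + 1)) atTop (nhds a1))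
    (hlim2 : Tendsto (fun t => q t ^ (l2 t)) atTop (nhds a2)) :
    Tendsto
      (fun t => Pq (q t) (l1 t) (l2 t) / ((1 - q t) ^ 2 * q t ^ (l1 t + l2 t + 1)))
      atTop (nhds (12 * (a2 - a1) ^ 2)) := by
  have key : ∀ t, Pq (q t) (l1 t) (l2 t) / ((1 - q t) ^ 2 * q t ^ (l1 t + l2 t + 1)) =
      (1 + q t) ^ 2 * (1 + q t + q t ^ 2) * (q t ^ (l2 t) - q t ^ (l1 t + 1)) ^ 2 / q t := by
    intro t
    obtain ⟨hx0, hx1⟩ := hq t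
    set x := q t with hxdef
    have hx0' : x ≠ 0 := ne_of_gt hx0
    have h1x : (1:ℝ) - x ≠ 0 := by
      intro h; apply absurd hx1; simp [sub_eq_zero] at h; simp [← h]
    have hA : x ^ (l1 t + 1) ≠ 0 := pow_ne_zero _ hx0'
    have hB : x ^ (l2 t) ≠ 0 := pow_ne_zero _ hx0'
    have hsq : (x ^ 2) ^ (l1 t + 1) = (x ^ (l1 t + 1)) ^ 2 := by
      rw [← pow_mul, ← pow_mul, Nat.mul_comm]
    have hsq2 : (x ^ 2) ^ (l2 t) = (x ^ (l2 t)) ^ 2 := by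
      rw [← pow_mul, ← pow_mul, Nat.mul_comm]
    have hAB : x ^ (l1 t + l2 t + 1) = x ^ (l1 t + 1) * x ^ (l2 t) := by
      rw [← pow_add]; ring_nf
    have hxx2 : x - x ^ 2 ≠ 0 := by
      have : x - x ^ 2 = x * (1 - x) := by ring
      rw [this]; exact mul_ne_zero hx0' h1x
    rw [Pq, s2, s2, hsq, hsq2, hAB]
    field_simp
    ring
  rw [show (fun t => Pq (q t) (l1 t) (l2 t) / ((1 - q t) ^ 2 * q t ^ (l1 t + l2 t + 1)))
      = fun t => (1 + q t) ^ 2 * (1 + q t + q t ^ 2) * (q t ^ (l2 t) - q t ^ (l1 t + 1)) ^ 2 / q t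
    from funext key]
  have h : Tendsto (fun t => (1 + q t) ^ 2 * (1 + q t + q t ^ 2) *
      (q t ^ (l2 t) - q t ^ (l1 t + 1)) ^ 2 / q t) atTop
      (nhds ((1 + 1) ^ 2 * (1 + 1 + 1 ^ 2) * (a2 - a1) ^ 2 / 1)) := by
    exact ((((hqlim.const_add 1).pow 2).mul
      (((hqlim.const_add 1).add (hqlim.pow 2)))).mul
      ((hlim2.sub hlim1).pow 2)).div hqlim one_ne_zero
  convert h using 2
  norm_num
end

section
/- Let 0 < q < 1 and let μ_1 ≥ μ_2 ≥ 0 be integers. Then the series Σ over all pairs of integers λ_1 ≥ λ_2 ≥ 0 of P_q(λ_1,λ_2) · s_{(μ_1,μ_2)}(q^{λ_1+1}, q^{λ_2}) / s_{(μ_1,μ_2)}(1,q) converges and equals ∏_{i=1}^{2} (1−q^i)(1−q^{i+1}) / ((1−q^{μ_i−i+3})(1−q^{μ_i−i+4})). -/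
lemma geomPair (q : ℝ) (hq0 : 0 < q) (hq1 : q < 1) (a b : ℕ) (ha : 1 ≤ a) :
    HasSum (fun l : ℕ × ℕ => if l.2 ≤ l.1 then q ^ ((l.1 + 1) * a + l.2 * b) else 0)
      (q ^ a / ((1 - q ^ a) * (1 - q ^ (a + b)))) := by
  have hqa0 : 0 ≤ q ^ a := le_of_lt (pow_pos hq0 a)
  have hqa1 : q ^ a < 1 := pow_lt_one₀ (le_of_lt hq0) hq1 (by omega)
  have hqab0 : 0 ≤ q ^ (a + b) := le_of_lt (pow_pos hq0 _)
  have hqab1 : q ^ (a + b) < 1 := pow_lt_one₀ (le_of_lt hq0) hq1 (by omega)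
  have hg : HasSum (fun d : ℕ => q ^ a * (q ^ a) ^ d) (q ^ a * (1 - q ^ a)⁻¹) :=
    (hasSum_geometric_of_lt_one hqa0 hqa1).mul_left _
  have hh : HasSum (fun m : ℕ => (q ^ (a + b)) ^ m) ((1 - q ^ (a + b))⁻¹) :=
    hasSum_geometric_of_lt_one hqab0 hqab1
  have hs : Summable (fun p : ℕ × ℕ => (q ^ a * (q ^ a) ^ p.1) * (q ^ (a + b)) ^ p.2) :=
    Summable.mul_of_nonneg hg.summable hh.summable
      (fun d => by positivity) (fun m => by positivity)
  have hprod : HasSum (fun p : ℕ × ℕ => (q ^ a * (q ^ a) ^ p.1) * (q ^ (a + b)) ^ p.2)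
      (q ^ a * (1 - q ^ a)⁻¹ * (1 - q ^ (a + b))⁻¹) := hg.mul hh hs
  have hi : Function.Injective (fun p : ℕ × ℕ => ((p.2 + p.1, p.2) : ℕ × ℕ)) := by
    intro p p' h
    simp only [Prod.mk.injEq] at h
    exact Prod.ext (by omega) h.2
  have h0 : ∀ x : ℕ × ℕ, x ∉ Set.range (fun p : ℕ × ℕ => ((p.2 + p.1, p.2) : ℕ × ℕ)) →
      (if x.2 ≤ x.1 then q ^ ((x.1 + 1) * a + x.2 * b) else 0) = 0 := by
    intro x hx
    rw [if_neg]
    intro hle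
    exact hx ⟨(x.1 - x.2, x.2), Prod.ext (by simp; omega) rfl⟩
  rw [← hi.hasSum_iff h0]
  have hfun : (fun l : ℕ × ℕ => if l.2 ≤ l.1 then q ^ ((l.1 + 1) * a + l.2 * b) else 0) ∘
      (fun p : ℕ × ℕ => ((p.2 + p.1, p.2) : ℕ × ℕ)) =
      fun p : ℕ × ℕ => (q ^ a * (q ^ a) ^ p.1) * (q ^ (a + b)) ^ p.2 := by
    funext p
    simp only [Function.comp_apply, if_pos (Nat.le_add_right _ _)]
    rw [← pow_mul, ← pow_mul, ← pow_add, ← pow_add]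
    congr 1
    ring
  rw [hfun]
  convert hprod using 1
  rw [div_eq_mul_inv, mul_inv, ← mul_assoc]

/-- the dual Cauchy evaluation
`Σ_{λ1 ≥ λ2 ≥ 0} P_q(λ) s_μ(q^{λ1+1},q^{λ2})/s_μ(1,q)
  = ∏_{i=1}^2 (1−q^i)(1−q^{i+1})/((1−q^{μ_i−i+3})(1−q^{μ_i−i+4}))`. -/
theorem stmt13 (q : ℝ) (hq0 : 0 < q) (hq1 : q < 1) (μ1 μ2 : ℕ) (hμ : μ2 ≤ μ1) :
    HasSum
      (fun l : ℕ × ℕ =>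
        if l.2 ≤ l.1 then
          Pq q l.1 l.2 * s2 μ1 μ2 (q ^ (l.1 + 1)) (q ^ l.2) / s2 μ1 μ2 1 q
        else 0)
      (((1 - q) * (1 - q ^ 2) / ((1 - q ^ (μ1 + 2)) * (1 - q ^ (μ1 + 3)))) *
        ((1 - q ^ 2) * (1 - q ^ 3) / ((1 - q ^ (μ2 + 1)) * (1 - q ^ (μ2 + 2))))) := by
  have hq0' : (0:ℝ) ≤ q := le_of_lt hq0
  have hqne : q ≠ 0 := ne_of_gt hq0
  have h1q : (0:ℝ) < 1 - q := by linarith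
  have h1qne : (1:ℝ) - q ≠ 0 := ne_of_gt h1q
  have hqq2 : q - q ^ 2 ≠ 0 := by nlinarith
  -- q^μ2 - q^(μ1+1) > 0
  have hmupos : 0 < q ^ μ2 - q ^ μ1 * q := by
    have := pow_lt_pow_right_of_lt_one₀ hq0 hq1 (show μ2 < μ1 + 1 by omega)
    rw [pow_succ] at this
    linarith
  have hmune : q ^ μ2 - q ^ μ1 * q ≠ 0 := ne_of_gt hmupos
  set c : ℝ := (1 - q ^ 2) ^ 2 * (1 - q ^ 3) / (q * (q ^ μ2 - q ^ μ1 * q)) with hc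
  have h1 := geomPair q hq0 hq1 (μ2 + 1) (μ1 + 3) (by omega)
  have h2 := geomPair q hq0 hq1 (μ1 + 3) (μ2 + 1) (by omega)
  have h3 := geomPair q hq0 hq1 (μ2 + 2) (μ1 + 2) (by omega)
  have h4 := geomPair q hq0 hq1 (μ1 + 2) (μ2 + 2) (by omega)
  have hsum := (((h1.add h2).sub (h3.add h4)).mul_left c)
  -- pointwise equality
  have hfun : (fun l : ℕ × ℕ => c *
        ((if l.2 ≤ l.1 then q ^ ((l.1 + 1) * (μ2 + 1) + l.2 * (μ1 + 3)) else 0) +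
          (if l.2 ≤ l.1 then q ^ ((l.1 + 1) * (μ1 + 3) + l.2 * (μ2 + 1)) else 0) -
         ((if l.2 ≤ l.1 then q ^ ((l.1 + 1) * (μ2 + 2) + l.2 * (μ1 + 2)) else 0) +
          (if l.2 ≤ l.1 then q ^ ((l.1 + 1) * (μ1 + 2) + l.2 * (μ2 + 2)) else 0)))) =
      (fun l : ℕ × ℕ =>
        if l.2 ≤ l.1 then
          Pq q l.1 l.2 * s2 μ1 μ2 (q ^ (l.1 + 1)) (q ^ l.2) / s2 μ1 μ2 1 q
        else 0) := by
    funext l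
    by_cases h : l.2 ≤ l.1
    · simp only [if_pos h, Pq, s2]
      have hxy : q ^ l.1 * q - q ^ l.2 ≠ 0 := by
        have := pow_lt_pow_right_of_lt_one₀ hq0 hq1 (show l.2 < l.1 + 1 by omega)
        rw [pow_succ] at this
        exact ne_of_lt (by linarith)
      have hcomm : ∀ n : ℕ, ((q:ℝ) ^ 2) ^ n = (q ^ n) ^ 2 := fun n => by
        rw [← pow_mul, ← pow_mul, Nat.mul_comm]
      simp only [hcomm, one_pow, mul_one, one_mul, pow_mul, pow_add, pow_one, mul_pow]
      rw [hc]
      have hxy' : q * q ^ l.1 - q ^ l.2 ≠ 0 := by rwa [mul_comm]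
      have hm' : q ^ μ2 - q * q ^ μ1 ≠ 0 := by rwa [mul_comm]
      field_simp
      ring
    · simp [h]
  rw [hfun] at hsum
  convert hsum using 1
  all_goals try rfl
  -- value identity
  have e1 : (μ2 + 1) + (μ1 + 3) = μ1 + μ2 + 4 := by omega
  have e2 : (μ1 + 3) + (μ2 + 1) = μ1 + μ2 + 4 := by omega
  have e3 : (μ2 + 2) + (μ1 + 2) = μ1 + μ2 + 4 := by omega
  have e4 : (μ1 + 2) + (μ2 + 2) = μ1 + μ2 + 4 := by omega
  rw [e1, e2, e3, e4, hc]
  have hP1 : q ^ μ1 ≤ 1 := pow_le_one₀ hq0' (le_of_lt hq1)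
  have hR1 : q ^ μ2 ≤ 1 := pow_le_one₀ hq0' (le_of_lt hq1)
  have hP0 : 0 < q ^ μ1 := pow_pos hq0 μ1
  have hR0 : 0 < q ^ μ2 := pow_pos hq0 μ2
  have hd1 : (1:ℝ) - q ^ (μ2 + 1) ≠ 0 := by
    have : q ^ (μ2 + 1) < 1 := pow_lt_one₀ hq0' hq1 (by omega)
    intro h; nlinarith
  have hd2 : (1:ℝ) - q ^ (μ2 + 2) ≠ 0 := by
    have : q ^ (μ2 + 2) < 1 := pow_lt_one₀ hq0' hq1 (by omega)
    intro h; nlinarith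
  have hd3 : (1:ℝ) - q ^ (μ1 + 2) ≠ 0 := by
    have : q ^ (μ1 + 2) < 1 := pow_lt_one₀ hq0' hq1 (by omega)
    intro h; nlinarith
  have hd4 : (1:ℝ) - q ^ (μ1 + 3) ≠ 0 := by
    have : q ^ (μ1 + 3) < 1 := pow_lt_one₀ hq0' hq1 (by omega)
    intro h; nlinarith
  have hdT : (1:ℝ) - q ^ (μ1 + μ2 + 4) ≠ 0 := by
    have : q ^ (μ1 + μ2 + 4) < 1 := pow_lt_one₀ hq0' hq1 (by omega)
    intro h; nlinarith
  have hm' : q ^ μ2 - q * q ^ μ1 ≠ 0 := by rwa [mul_comm]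
  simp only [pow_add, pow_one] at *
  have hd1' : 1 - q * q ^ μ2 ≠ 0 := by convert hd1 using 2; ring
  have hd2' : 1 - q ^ 2 * q ^ μ2 ≠ 0 := by convert hd2 using 2; ring
  have hd3' : 1 - q ^ 2 * q ^ μ1 ≠ 0 := by convert hd3 using 2; ring
  have hd4' : 1 - q ^ 3 * q ^ μ1 ≠ 0 := by convert hd4 using 2; ring
  have hdT' : 1 - q ^ 4 * q ^ μ1 * q ^ μ2 ≠ 0 := by convert hdT using 2; ring
  field_simp
  ring
end

section
/- Let μ_1 ≥ μ_2 ≥ 0 be integers. Then ∫∫_{0 ≤ a_1 ≤ a_2 ≤ 1} 12(a_2−a_1)² · [s_{(μ_1,μ_2)}(a_1,a_2) / (μ_1−μ_2+1)] da_1 da_2 = ∏_{i=1}^{2} i(i+1) / ((μ_i−i+3)(μ_i−i+4)); equivalently, the expectation of s_{(μ_1,μ_2)}(a_1,a_2)/s_{(μ_1,μ_2)}(1,1) with respect to the density ρ(a_1,a_2) = 12(a_2−a_1)² on {0 ≤ a_1 ≤ a_2 ≤ 1} equals [2/((μ_1+2)(μ_1+3))]·[6/((μ_2+1)(μ_2+2))].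 -/
open MeasureTheory Set

abbrev S14 : Set (ℝ × ℝ) := {p : ℝ × ℝ | 0 ≤ p.1 ∧ p.1 ≤ p.2 ∧ p.2 ≤ 1}

lemma S14_meas : MeasurableSet S14 := by
  apply MeasurableSet.inter
  · exact measurableSet_le measurable_const measurable_fst
  apply MeasurableSet.inter
  · exact measurableSet_le measurable_fst measurable_snd
  · exact measurableSet_le measurable_snd measurable_const

lemma S14_sub : S14 ⊆ Icc ((0:ℝ),(0:ℝ)) (1,1) := by
  rintro ⟨u, v⟩ ⟨h1, h2, h3⟩
  simp only [Set.mem_Icc, Prod.le_def]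
  exact ⟨⟨h1, h1.trans h2⟩, h2.trans h3, h3⟩

lemma mono_integrable (m n : ℕ) :
    IntegrableOn (fun p : ℝ × ℝ => p.1 ^ m * p.2 ^ n) S14 := by
  apply IntegrableOn.mono_set _ S14_sub
  exact (ContinuousOn.integrableOn_compact isCompact_Icc (by fun_prop))

lemma mono_int (m n : ℕ) :
    ∫ p in S14, p.1 ^ m * p.2 ^ n
      = 1 / (((m : ℝ) + 1) * ((m : ℝ) + (n : ℝ) + 2)) := by
  rw [← MeasureTheory.integral_indicator S14_meas, MeasureTheory.Measure.volume_eq_prod ℝ ℝ,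
    MeasureTheory.integral_prod]
  · have key : (fun u : ℝ => ∫ v : ℝ, S14.indicator (fun p : ℝ × ℝ => p.1 ^ m * p.2 ^ n) (u, v))
        = (Icc (0:ℝ) 1).indicator (fun u => (u ^ m - u ^ (m + n + 1)) / ((n : ℝ) + 1)) := by
      funext u
      by_cases h : 0 ≤ u ∧ u ≤ 1
      · rw [Set.indicator_of_mem (Set.mem_Icc.2 h)]
        have h1 : (fun v : ℝ => S14.indicator (fun p : ℝ × ℝ => p.1 ^ m * p.2 ^ n) (u, v))
            = (Icc u 1).indicator (fun v => u ^ m * v ^ n) := by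
          funext v
          by_cases hv : u ≤ v ∧ v ≤ 1
          · rw [Set.indicator_of_mem (Set.mem_Icc.2 hv),
              Set.indicator_of_mem (show ((u,v) : ℝ×ℝ) ∈ S14 from ⟨h.1, hv.1, hv.2⟩)]
          · rw [Set.indicator_of_notMem (fun hm => hv (Set.mem_Icc.1 hm)),
              Set.indicator_of_notMem (fun hm => hv ⟨hm.2.1, hm.2.2⟩)]
        rw [h1, MeasureTheory.integral_indicator measurableSet_Icc,
          MeasureTheory.integral_Icc_eq_integral_Ioc,
          ← intervalIntegral.integral_of_le h.2, intervalIntegral.integral_const_mul,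
          integral_pow]
        rw [one_pow]
        field_simp
        ring
      · rw [Set.indicator_of_notMem (fun hm => h (Set.mem_Icc.1 hm))]
        have h1 : (fun v : ℝ => S14.indicator (fun p : ℝ × ℝ => p.1 ^ m * p.2 ^ n) (u, v))
            = fun _ => (0 : ℝ) := by
          funext v
          apply Set.indicator_of_notMem
          rintro ⟨h1, h2, h3⟩
          exact h ⟨h1, (h2.trans h3)⟩
        rw [h1, integral_zero]
    rw [key, MeasureTheory.integral_indicator measurableSet_Icc,
      MeasureTheory.integral_Icc_eq_integral_Ioc,
      ← intervalIntegral.integral_of_le (zero_le_one' ℝ)]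
    have hi1 : IntervalIntegrable (fun u : ℝ => u ^ m) volume 0 1 :=
      intervalIntegral.intervalIntegrable_pow m
    have hi2 : IntervalIntegrable (fun u : ℝ => u ^ (m + n + 1)) volume 0 1 :=
      intervalIntegral.intervalIntegrable_pow _
    rw [intervalIntegral.integral_div, intervalIntegral.integral_sub hi1 hi2,
      integral_pow, integral_pow]
    have hm : ((m : ℝ) + 1) ≠ 0 := by positivity
    have hn : ((n : ℝ) + 1) ≠ 0 := by positivity
    have hmn : ((m : ℝ) + (n : ℝ) + 2) ≠ 0 := by positivity
    have hc : ((m + n + 1 : ℕ) : ℝ) + 1 = (m : ℝ) + (n : ℝ) + 2 := by push_cast; ring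
    rw [hc]
    field_simp
    ring
  · rw [← MeasureTheory.Measure.volume_eq_prod ℝ ℝ]
    exact (MeasureTheory.integrable_indicator_iff S14_meas).2 (mono_integrable m n)


/-- the expectation of `s_μ(a1,a2)/s_μ(1,1)` under the Jacobi-ensemble
density `ρ(a1,a2) = 12(a2−a1)²` on `{0 ≤ a1 ≤ a2 ≤ 1}` equals
`∏_{i=1}^2 i(i+1)/((μ_i−i+3)(μ_i−i+4))`. -/
theorem stmt14 (μ1 μ2 : ℕ) (hμ : μ2 ≤ μ1) :
    ∫ a in {p : ℝ × ℝ | 0 ≤ p.1 ∧ p.1 ≤ p.2 ∧ p.2 ≤ 1},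
        12 * (a.2 - a.1) ^ 2 * (s2 μ1 μ2 a.1 a.2 / ((μ1 : ℝ) - μ2 + 1)) =
      (2 / (((μ1 : ℝ) + 2) * ((μ1 : ℝ) + 3))) * (6 / (((μ2 : ℝ) + 1) * ((μ2 : ℝ) + 2))) := by
  have hd : ((μ1 : ℝ) - (μ2 : ℝ) + 1) ≠ 0 := by
    have : (μ2 : ℝ) ≤ (μ1 : ℝ) := Nat.cast_le.2 hμ
    linarith
  have hcong : ∀ a : ℝ × ℝ,
      12 * (a.2 - a.1) ^ 2 * (s2 μ1 μ2 a.1 a.2 / ((μ1 : ℝ) - μ2 + 1)) =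
        (12 / ((μ1 : ℝ) - μ2 + 1)) *
          (a.1 ^ (μ1 + 2) * a.2 ^ μ2 - a.1 ^ (μ2 + 1) * a.2 ^ (μ1 + 1)
            - a.1 ^ (μ1 + 1) * a.2 ^ (μ2 + 1) + a.1 ^ μ2 * a.2 ^ (μ1 + 2)) := by
    rintro ⟨u, v⟩
    by_cases huv : u = v
    · subst huv
      have h0 : u ^ (μ1 + 2) * u ^ μ2 - u ^ (μ2 + 1) * u ^ (μ1 + 1)
          - u ^ (μ1 + 1) * u ^ (μ2 + 1) + u ^ μ2 * u ^ (μ1 + 2) = 0 := by ring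
      rw [h0, mul_zero]
      simp
    · have h : u - v ≠ 0 := sub_ne_zero.2 huv
      simp only [s2]
      field_simp
      ring
  simp only [hcong]
  rw [MeasureTheory.integral_const_mul]
  have e1 := mono_int (μ1 + 2) μ2
  have e2 := mono_int (μ2 + 1) (μ1 + 1)
  have e3 := mono_int (μ1 + 1) (μ2 + 1)
  have e4 := mono_int μ2 (μ1 + 2)
  have i1 := mono_integrable (μ1 + 2) μ2
  have i2 := mono_integrable (μ2 + 1) (μ1 + 1)
  have i3 := mono_integrable (μ1 + 1) (μ2 + 1)
  have i4 := mono_integrable μ2 (μ1 + 2)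
  have i12 : IntegrableOn (fun p : ℝ × ℝ =>
      p.1 ^ (μ1 + 2) * p.2 ^ μ2 - p.1 ^ (μ2 + 1) * p.2 ^ (μ1 + 1)) S14 := i1.sub i2
  have i123 : IntegrableOn (fun p : ℝ × ℝ =>
      p.1 ^ (μ1 + 2) * p.2 ^ μ2 - p.1 ^ (μ2 + 1) * p.2 ^ (μ1 + 1)
        - p.1 ^ (μ1 + 1) * p.2 ^ (μ2 + 1)) S14 := i12.sub i3
  rw [MeasureTheory.integral_add i123 i4,
    MeasureTheory.integral_sub i12 i3, MeasureTheory.integral_sub i1 i2,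
    e1, e2, e3, e4]
  push_cast
  have h1 : ((μ1 : ℝ) + 2) ≠ 0 := by positivity
  have h2 : ((μ1 : ℝ) + 3) ≠ 0 := by positivity
  have h3 : ((μ2 : ℝ) + 1) ≠ 0 := by positivity
  have h4 : ((μ2 : ℝ) + 2) ≠ 0 := by positivity
  have h5 : ((μ1 : ℝ) + (μ2 : ℝ) + 4) ≠ 0 := by positivity
  field_simp
  ring
end

section
/- Let 0 < q < 1, let u_1, u_2 be distinct real numbers with 0 < u_i < q^{−1}, and let λ_1 ≥ λ_2 ≥ 0 be integers. Then the series Σ over all pairs of integers ν_1 ≥ ν_2 ≥ 0 of P(λ→ν) · s_{(ν_1,ν_2)}(u_1,u_2) / s_{(ν_1,ν_2)}(1,q) converges and equals [s_{(λ_1,λ_2)}(u_1,u_2) / s_{(λ_1,λ_2)}(1,q)] · ∏_{i=1}^{2} (1−q^i)(1−q^{i+1}) / ((1−u_i q)(1−u_i q²)). -/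
open Finset

/-- Two-variable complete homogeneous symmetric polynomial
`h_d(x,y) = Σ_{i=0}^d x^i y^{d−i}` for `d ≥ 0`, and `h_d := 0` for `d < 0`. -/
noncomputable def h2 (d : ℤ) (x y : ℝ) : ℝ :=
  if d < 0 then 0 else ∑ i ∈ Finset.range (d.toNat + 1), x ^ i * y ^ (d.toNat - i)

/-- Two-variable skew Schur polynomial
`s_{ν/λ}(x,y) = h_{ν1−λ1} h_{ν2−λ2} − h_{ν1−λ2+1} h_{ν2−λ1−1}`. -/
noncomputable def sskew2 (n1 n2 l1 l2 : ℕ) (x y : ℝ) : ℝ :=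
  h2 ((n1 : ℤ) - l1) x y * h2 ((n2 : ℤ) - l2) x y -
    h2 ((n1 : ℤ) - l2 + 1) x y * h2 ((n2 : ℤ) - l1 - 1) x y

/-- The Markov transition weight
`P(λ→ν) = (1−q)(1−q²)²(1−q³) s_ν(1,q) s_{ν/λ}(q,q²) / s_λ(1,q)`. -/
noncomputable def Ptrans (q : ℝ) (l1 l2 n1 n2 : ℕ) : ℝ :=
  (1 - q) * (1 - q ^ 2) ^ 2 * (1 - q ^ 3) * s2 n1 n2 1 q * sskew2 n1 n2 l1 l2 q (q ^ 2) /
    s2 l1 l2 1 q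

/-- auxiliary one-variable building block `A(x,b,a) = x^a h_{a-b}(q,q²)`. -/
noncomputable def Aa (q x : ℝ) (b a : ℕ) : ℝ := x ^ a * h2 ((a : ℤ) - b) q (q ^ 2)

/-- auxiliary: value of the one-variable series. -/
noncomputable def Fv (q x : ℝ) (b : ℕ) : ℝ := x ^ b / ((1 - x * q) * (1 - x * q ^ 2))

lemma geom_sum_eval (q : ℝ) (n : ℕ) :
    (∑ i ∈ Finset.range (n + 1), q ^ i * (q ^ 2) ^ (n - i)) * (1 - q)
      = q ^ n - q ^ (2 * n + 1) := by
  induction n with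
  | zero => simp
  | succ n ih =>
    rw [Finset.sum_range_succ]
    have hstep : ∑ i ∈ Finset.range (n + 1), q ^ i * (q ^ 2) ^ (n + 1 - i)
        = q ^ 2 * ∑ i ∈ Finset.range (n + 1), q ^ i * (q ^ 2) ^ (n - i) := by
      rw [Finset.mul_sum]
      refine Finset.sum_congr rfl fun i hi => ?_
      have hle : i ≤ n := Nat.lt_succ_iff.mp (Finset.mem_range.mp hi)
      have h1 : n + 1 - i = (n - i) + 1 := by omega
      rw [h1, pow_succ]
      ring
    rw [hstep]
    simp only [Nat.sub_self, pow_zero, mul_one]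
    linear_combination q ^ 2 * ih

lemma h2_nat_eval (q : ℝ) (n : ℕ) :
    h2 (n : ℤ) q (q ^ 2) * (1 - q) = q ^ n - q ^ (2 * n + 1) := by
  have h0 : ¬ ((n : ℤ) < 0) := Int.not_lt.mpr (Int.natCast_nonneg n)
  rw [h2, if_neg h0, Int.toNat_natCast]
  exact geom_sum_eval q n

lemma Aa_nonneg (q x : ℝ) (hq : 0 ≤ q) (hx : 0 ≤ x) (b a : ℕ) : 0 ≤ Aa q x b a := by
  unfold Aa h2
  split
  · simp
  · refine mul_nonneg (pow_nonneg hx _) (Finset.sum_nonneg fun i _ => ?_)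
    exact mul_nonneg (pow_nonneg hq _) (pow_nonneg (pow_nonneg hq 2) _)

lemma hasSum_Aa (q x : ℝ) (hq0 : 0 < q) (hq1 : q < 1) (hx : 0 ≤ x) (hxq : x * q < 1)
    (b : ℕ) : HasSum (Aa q x b) (Fv q x b) := by
  have hq2 : x * q ^ 2 < 1 := by nlinarith
  have hxq0 : 0 ≤ x * q := by positivity
  have hxq20 : 0 ≤ x * q ^ 2 := by positivity
  have h1q : (0:ℝ) < 1 - q := by linarith
  have hA : (0:ℝ) < 1 - x * q := by linarith
  have hB : (0:ℝ) < 1 - x * q ^ 2 := by linarith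
  have g1 : HasSum (fun n : ℕ => (x * q) ^ n) (1 - x * q)⁻¹ :=
    hasSum_geometric_of_lt_one hxq0 hxq
  have g2 : HasSum (fun n : ℕ => (x * q ^ 2) ^ n) (1 - x * q ^ 2)⁻¹ :=
    hasSum_geometric_of_lt_one hxq20 hq2
  have g3 : HasSum (fun n : ℕ => x ^ b / (1 - q) * ((x * q) ^ n - q * (x * q ^ 2) ^ n))
      (x ^ b / (1 - q) * ((1 - x * q)⁻¹ - q * (1 - x * q ^ 2)⁻¹)) :=
    (g1.sub (g2.mul_left q)).mul_left _
  have hfun : (fun n : ℕ => x ^ b / (1 - q) * ((x * q) ^ n - q * (x * q ^ 2) ^ n))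
      = fun n : ℕ => Aa q x b (n + b) := by
    funext n
    have harg : ((n + b : ℕ) : ℤ) - (b : ℤ) = (n : ℤ) := by push_cast; ring
    have hh : h2 ((n : ℤ)) q (q ^ 2) = (q ^ n - q ^ (2 * n + 1)) / (1 - q) :=
      eq_div_of_mul_eq h1q.ne' (h2_nat_eval q n)
    rw [Aa, harg, hh]
    rw [mul_pow, mul_pow]
    field_simp
    ring
  rw [hfun] at g3
  have g4 := (hasSum_nat_add_iff (f := Aa q x b) b).mp g3
  have hz : ∑ i ∈ Finset.range b, Aa q x b i = 0 := by
    refine Finset.sum_eq_zero fun i hi => ?_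
    have hneg : ((i : ℤ) - b) < 0 := by
      have := Finset.mem_range.mp hi; omega
    rw [Aa, h2, if_pos hneg, mul_zero]
  rw [hz, add_zero] at g4
  have hval : x ^ b / (1 - q) * ((1 - x * q)⁻¹ - q * (1 - x * q ^ 2)⁻¹) = Fv q x b := by
    rw [Fv]
    field_simp
    rw [div_sub_div _ _ (ne_of_gt (by linarith)) (ne_of_gt (by linarith))]
    ring
  rwa [hval] at g4

lemma half_sum {g : ℕ × ℕ → ℝ} {s : ℝ}
    (hsym : ∀ x y : ℕ, g (x, y) = g (y, x)) (hdiag : ∀ x : ℕ, g (x, x) = 0)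
    (hg : HasSum g s) :
    HasSum (fun a : ℕ × ℕ => if a.2 < a.1 then g a else 0) (s / 2) := by
  have hgpind : (fun a : ℕ × ℕ => if a.2 < a.1 then g a else 0)
      = Set.indicator {a : ℕ × ℕ | a.2 < a.1} g := by
    funext a; simp [Set.indicator_apply]
  have hsummable : Summable (fun a : ℕ × ℕ => if a.2 < a.1 then g a else 0) := by
    rw [hgpind]; exact hg.summable.indicator _
  obtain ⟨x, hx⟩ := hsummable
  have hswap : HasSum (fun a : ℕ × ℕ => if a.1 < a.2 then g a else 0) x := by
    have h := (Equiv.prodComm ℕ ℕ).hasSum_iff.mpr hx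
    have heq : ((fun a : ℕ × ℕ => if a.2 < a.1 then g a else 0) ∘ ⇑(Equiv.prodComm ℕ ℕ))
        = fun a : ℕ × ℕ => if a.1 < a.2 then g a else 0 := by
      funext a
      obtain ⟨i, j⟩ := a
      simp [Equiv.prodComm_apply, hsym j i]
    rwa [heq] at h
  have hsum : HasSum g (x + x) := by
    have h := hx.add hswap
    have heq : (fun a : ℕ × ℕ =>
        (if a.2 < a.1 then g a else 0) + (if a.1 < a.2 then g a else 0)) = g := by
      funext a
      obtain ⟨i, j⟩ := a
      rcases lt_trichotomy i j with h' | h' | h'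
      · simp [h', not_lt.mpr h'.le]
      · subst h'; simp [hdiag]
      · simp [h', not_lt.mpr h'.le]
    rwa [heq] at h
  have hxs : x = s / 2 := by
    have := hg.unique hsum
    linarith
  rwa [hxs] at hx

set_option maxHeartbeats 2000000 in
/-- the one-step evaluation equation (skew Cauchy identity) for the Markov
transition weights `P(λ→ν)`. -/
theorem stmt15 (q u1 u2 : ℝ) (hq0 : 0 < q) (hq1 : q < 1) (hne : u1 ≠ u2)
    (hu1 : 0 < u1) (hu1q : u1 < q⁻¹) (hu2 : 0 < u2) (hu2q : u2 < q⁻¹)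
    (l1 l2 : ℕ) (hl : l2 ≤ l1) :
    HasSum
      (fun nu : ℕ × ℕ =>
        if nu.2 ≤ nu.1 then
          Ptrans q l1 l2 nu.1 nu.2 * s2 nu.1 nu.2 u1 u2 / s2 nu.1 nu.2 1 q
        else 0)
      ((s2 l1 l2 u1 u2 / s2 l1 l2 1 q) *
        (((1 - q) * (1 - q ^ 2) / ((1 - u1 * q) * (1 - u1 * q ^ 2))) *
          ((1 - q ^ 2) * (1 - q ^ 3) / ((1 - u2 * q) * (1 - u2 * q ^ 2))))) := by
  -- basic inequalities
  have h1q : (0:ℝ) < 1 - q := by linarith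
  have hu1ql : u1 * q < 1 := by
    have h := mul_lt_mul_of_pos_right hu1q hq0
    rwa [inv_mul_cancel₀ hq0.ne'] at h
  have hu2ql : u2 * q < 1 := by
    have h := mul_lt_mul_of_pos_right hu2q hq0
    rwa [inv_mul_cancel₀ hq0.ne'] at h
  have hu1q2 : u1 * q ^ 2 < 1 := by nlinarith
  have hu2q2 : u2 * q ^ 2 < 1 := by nlinarith
  have hd1 : (0:ℝ) < 1 - u1 * q := by linarith
  have hd2 : (0:ℝ) < 1 - u1 * q ^ 2 := by linarith
  have hd3 : (0:ℝ) < 1 - u2 * q := by linarith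
  have hd4 : (0:ℝ) < 1 - u2 * q ^ 2 := by linarith
  have hul : u1 - u2 ≠ 0 := sub_ne_zero.mpr hne
  have hs2pos : ∀ m1 m2 : ℕ, m2 ≤ m1 → 0 < s2 m1 m2 1 q := by
    intro m1 m2 hm
    rw [s2]
    have hpow : q ^ (m1 + 1) < q ^ m2 :=
      pow_lt_pow_right_of_lt_one₀ hq0 hq1 (by omega)
    have hnum : (0:ℝ) < 1 ^ (m1 + 1) * q ^ m2 - q ^ (m1 + 1) * 1 ^ m2 := by
      simpa using sub_pos.mpr hpow
    exact div_pos hnum (by simpa using h1q)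
  have hsl := hs2pos l1 l2 hl
  -- product sums
  have key : ∀ (x y : ℝ), 0 < x → x * q < 1 → 0 < y → y * q < 1 → ∀ b c : ℕ,
      HasSum (fun a : ℕ × ℕ => Aa q x b a.1 * Aa q y c a.2) (Fv q x b * Fv q y c) := by
    intro x y hx hxq hy hyq b c
    have hX := hasSum_Aa q x hq0 hq1 hx.le hxq b
    have hY := hasSum_Aa q y hq0 hq1 hy.le hyq c
    refine hX.mul hY (summable_mul_of_summable_norm ?_ ?_)
    · exact hX.summable.congr fun i =>
        (Real.norm_of_nonneg (Aa_nonneg q x hq0.le hx.le b i)).symm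
    · exact hY.summable.congr fun i =>
        (Real.norm_of_nonneg (Aa_nonneg q y hq0.le hy.le c i)).symm
  have h11 := key u1 u2 hu1 hu1ql hu2 hu2ql (l1 + 1) l2
  have h12 := key u1 u2 hu1 hu1ql hu2 hu2ql l2 (l1 + 1)
  have h21 := key u2 u1 hu2 hu2ql hu1 hu1ql (l1 + 1) l2
  have h22 := key u2 u1 hu2 hu2ql hu1 hu1ql l2 (l1 + 1)
  set P : ℕ × ℕ → ℝ := fun a =>
    (Aa q u1 (l1 + 1) a.1 * Aa q u2 l2 a.2 - Aa q u1 l2 a.1 * Aa q u2 (l1 + 1) a.2) -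
      (Aa q u2 (l1 + 1) a.1 * Aa q u1 l2 a.2 - Aa q u2 l2 a.1 * Aa q u1 (l1 + 1) a.2)
    with hPdef
  have hP : HasSum P
      ((Fv q u1 (l1 + 1) * Fv q u2 l2 - Fv q u1 l2 * Fv q u2 (l1 + 1)) -
        (Fv q u2 (l1 + 1) * Fv q u1 l2 - Fv q u2 l2 * Fv q u1 (l1 + 1))) :=
    (h11.sub h12).sub (h21.sub h22)
  have hsym : ∀ x y : ℕ, P (x, y) = P (y, x) := by
    intro x y; simp only [hPdef]; ring
  have hdiag : ∀ x : ℕ, P (x, x) = 0 := by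
    intro x; simp only [hPdef, Aa]; ring
  have hhalf := half_sum hsym hdiag hP
  -- reindexing
  set e : ℕ × ℕ → ℕ × ℕ := fun v => (v.1 + 1, v.2) with he
  have hinj : Function.Injective e := by
    intro a b hab
    simp only [he, Prod.ext_iff] at hab
    exact Prod.ext (by omega) hab.2
  have hvanish : ∀ x ∉ Set.range e, (if x.2 < x.1 then P x else 0) = 0 := by
    intro x hx
    rw [if_neg]
    intro hlt
    exact hx ⟨(x.1 - 1, x.2), Prod.ext (by simp [he]; omega) rfl⟩
  have hEe := (Function.Injective.hasSum_iff hinj hvanish).mpr hhalf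
  set c : ℝ :=
    (1 - q) * (1 - q ^ 2) ^ 2 * (1 - q ^ 3) / (s2 l1 l2 1 q * (u1 - u2)) with hc
  have hfinal := hEe.mul_left c
  -- identify the function
  have harg1 : ∀ m : ℕ, ((m + 1 : ℕ) : ℤ) - ((l1 + 1 : ℕ) : ℤ) = (m : ℤ) - l1 := by
    intro m; push_cast; ring
  have harg2 : ∀ m : ℕ, ((m + 1 : ℕ) : ℤ) - ((l2 : ℕ) : ℤ) = (m : ℤ) - l2 + 1 := by
    intro m; push_cast; ring
  have harg3 : ∀ m : ℕ, ((m : ℕ) : ℤ) - ((l1 + 1 : ℕ) : ℤ) = (m : ℤ) - l1 - 1 := by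
    intro m; push_cast; ring
  have hfuneq : (fun nu : ℕ × ℕ =>
      if nu.2 ≤ nu.1 then
        Ptrans q l1 l2 nu.1 nu.2 * s2 nu.1 nu.2 u1 u2 / s2 nu.1 nu.2 1 q
      else 0)
      = fun v : ℕ × ℕ => c * ((fun x : ℕ × ℕ => if x.2 < x.1 then P x else 0) ∘ e) v := by
    funext v
    obtain ⟨n1, n2⟩ := v
    by_cases hcase : n2 ≤ n1
    · rw [if_pos hcase]
      have hsnu := hs2pos n1 n2 hcase
      simp only [Function.comp_apply, he]
      rw [if_pos (by simpa using Nat.lt_succ_of_le hcase)]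
      have hPval : P (n1 + 1, n2) =
          (u1 - u2) * s2 n1 n2 u1 u2 * sskew2 n1 n2 l1 l2 q (q ^ 2) := by
        simp only [hPdef, Aa, sskew2]
        rw [harg1 n1, harg2 n1, harg3 n2]
        rw [s2]
        field_simp
      rw [hPval, Ptrans, hc]
      field_simp [hsnu.ne', hsl.ne', hul]
    · rw [if_neg hcase]
      simp only [Function.comp_apply, he]
      rw [if_neg (by simp; omega), mul_zero]
  rw [hfuneq]
  have hE2 : ((Fv q u1 (l1 + 1) * Fv q u2 l2 - Fv q u1 l2 * Fv q u2 (l1 + 1)) -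
        (Fv q u2 (l1 + 1) * Fv q u1 l2 - Fv q u2 l2 * Fv q u1 (l1 + 1))) / 2
      = ((u1 - u2) * s2 l1 l2 u1 u2) /
          ((1 - u1 * q) * (1 - u1 * q ^ 2) * ((1 - u2 * q) * (1 - u2 * q ^ 2))) := by
    simp only [Fv, s2]
    field_simp
    ring
  convert hfinal using 1
  · rfl
  rw [hE2, hc]
  field_simp
end

section
/- Let 0 < q < 1 and let ν_1 ≥ ν_2 ≥ 0 be integers. Then Σ over all pairs of integers λ_1 ≥ λ_2 ≥ 0 of P_q(λ_1,λ_2) · P(λ→ν) converges and equals (1−q)²(1−q²)⁴(1−q³)² · s_{(ν_1,ν_2)}(1,q) · s_{(ν_1,ν_2)}(q,q²,q,q²), where s_{(ν_1,ν_2)}(v_1,v_2,v_3,v_4) = h_{ν_1}(v)·h_{ν_2}(v) − h_{ν_1+1}(v)·h_{ν_2−1}(v) is the Schur polynomial of the two-row partition (ν_1,ν_2) in four variables v = (q,q²,q,q²), with h_d(v) the complete homogeneous symmetric polynomial of degree d in the four variables (h_d := 0 for d < 0). In other words, the Markov transition P applied to the Schur measure P_q yields the Schur measure with specializations (1,q)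 and (q,q²,q,q²). -/
open Finset

/-- Complete homogeneous symmetric polynomial of degree `d` (`h_d := 0` for `d < 0`) in
finitely many variables: the sum over all `d`-element multisets of the variables of the
product of their entries. -/
noncomputable def hh {ι : Type*} [Fintype ι] [DecidableEq ι] (d : ℤ) (v : ι → ℝ) : ℝ :=
  if d < 0 then 0
  else ∑ s ∈ (Finset.univ : Finset ι).sym d.toNat, ((s : Multiset ι).map v).prod

/-- Schur polynomial of the two-row partition `(n1, n2)` in four variables,
`s_{(n1,n2)}(v) = h_{n1}(v) h_{n2}(v) − h_{n1+1}(v) h_{n2−1}(v)`. -/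
noncomputable def s4 (n1 n2 : ℕ) (v : Fin 4 → ℝ) : ℝ :=
  hh (n1 : ℤ) v * hh (n2 : ℤ) v - hh ((n1 : ℤ) + 1) v * hh ((n2 : ℤ) - 1) v


section Aux

lemma count_fin4 (ms : Multiset (Fin 4)) :
    Multiset.count 0 ms + Multiset.count 1 ms + Multiset.count 2 ms + Multiset.count 3 ms
      = Multiset.card ms := by
  induction ms using Multiset.induction with
  | empty => simp
  | cons a t ih =>
      simp only [Multiset.count_cons, Multiset.card_cons]
      fin_cases a <;> simp <;> omega

variable {x y : ℝ}

lemma h2_nat (d : ℕ) : h2 (d : ℤ) x y = ∑ i ∈ Finset.range (d + 1), x ^ i * y ^ (d - i) := by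
  simp [h2]

lemma h2_neg {d : ℤ} (hd : d < 0) : h2 d x y = 0 := by simp [h2, hd]

lemma h2_mul_sub (d : ℕ) : h2 (d : ℤ) x y * (x - y) = x ^ (d+1) - y ^ (d+1) := by
  rw [h2_nat, ← geom_sum₂_mul x y (d+1)]
  simp only [Nat.add_sub_cancel]

lemma h2_mul_sub' (d : ℕ) : h2 ((d : ℤ) - 1) x y * (x - y) = x ^ d - y ^ d := by
  cases d with
  | zero => simp [h2_neg]
  | succ n =>
      have h := h2_mul_sub (x := x) (y := y) n
      have e : ((n : ℤ) + 1) - 1 = (n : ℤ) := by ring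
      push_cast
      rw [e, h]

lemma s2_eq_h2 (hxy : x ≠ y) (l1 l2 : ℕ) :
    s2 l1 l2 x y =
      h2 (l1 : ℤ) x y * h2 (l2 : ℤ) x y - h2 ((l1 : ℤ) + 1) x y * h2 ((l2 : ℤ) - 1) x y := by
  have hsub : x - y ≠ 0 := sub_ne_zero.mpr hxy
  have h1 := h2_mul_sub (x := x) (y := y) l1
  have h2' := h2_mul_sub (x := x) (y := y) l2
  have h3 : h2 ((l1:ℤ)+1) x y * (x - y) = x ^ (l1+2) - y ^ (l1+2) := by
    have h := h2_mul_sub (x := x) (y := y) (l1+1)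
    push_cast at h ⊢
    convert h using 2 <;> ring
  have h4 := h2_mul_sub' (x := x) (y := y) l2
  rw [s2, div_eq_iff hsub]
  apply mul_right_cancel₀ hsub
  have key : (x ^ (l1 + 1) * y ^ l2 - y ^ (l1 + 1) * x ^ l2) * (x - y) =
      ((x ^ (l1+1) - y ^ (l1+1)) * (x ^ (l2+1) - y ^ (l2+1)) -
       (x ^ (l1+2) - y ^ (l1+2)) * (x ^ l2 - y ^ l2)) := by ring
  rw [key, ← h1, ← h2', ← h3, ← h4]
  ring

lemma lagrange_id (r : Finset ℕ) (f1 f2 g1 g2 : ℕ → ℝ) :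
    (∑ k ∈ r, f1 k * g1 k) * (∑ k ∈ r, f2 k * g2 k) -
      (∑ k ∈ r, f1 k * g2 k) * (∑ k ∈ r, f2 k * g1 k) =
    ∑ p ∈ (r ×ˢ r).filter (fun p => p.1 < p.2),
      (f1 p.1 * f2 p.2 - f1 p.2 * f2 p.1) * (g1 p.1 * g2 p.2 - g1 p.2 * g2 p.1) := by
  classical
  set F : ℕ × ℕ → ℝ := fun p =>
    f1 p.1 * g1 p.1 * (f2 p.2 * g2 p.2) - f1 p.1 * g2 p.1 * (f2 p.2 * g1 p.2) with hF
  have expand : (∑ k ∈ r, f1 k * g1 k) * (∑ k ∈ r, f2 k * g2 k) -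
      (∑ k ∈ r, f1 k * g2 k) * (∑ k ∈ r, f2 k * g1 k) = ∑ p ∈ r ×ˢ r, F p := by
    rw [Finset.sum_mul_sum, Finset.sum_mul_sum, ← Finset.sum_sub_distrib]
    rw [Finset.sum_product]
    apply Finset.sum_congr rfl
    intro k1 _
    rw [← Finset.sum_sub_distrib]
  rw [expand]
  rw [← Finset.sum_filter_add_sum_filter_not (r ×ˢ r) (fun p => p.1 < p.2) F]
  rw [← Finset.sum_filter_add_sum_filter_not ((r ×ˢ r).filter (fun p => ¬ p.1 < p.2))
      (fun p => p.2 < p.1) F]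
  have hdiag : ∑ p ∈ (((r ×ˢ r).filter (fun p => ¬ p.1 < p.2)).filter
      (fun p => ¬ p.2 < p.1)), F p = 0 := by
    apply Finset.sum_eq_zero
    intro p hp
    simp only [Finset.mem_filter] at hp
    have : p.1 = p.2 := by omega
    simp [hF, this]
    ring
  rw [hdiag, add_zero]
  have hgt : ∑ p ∈ (((r ×ˢ r).filter (fun p => ¬ p.1 < p.2)).filter (fun p => p.2 < p.1)), F p
      = ∑ p ∈ (r ×ˢ r).filter (fun p => p.1 < p.2), F p.swap := by
    apply Finset.sum_nbij' Prod.swap Prod.swap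
    · intro p hp
      simp only [Finset.mem_filter, Finset.mem_product, Prod.fst_swap, Prod.snd_swap] at *
      obtain ⟨⟨⟨h1, h2⟩, h3⟩, h4⟩ := hp
      exact ⟨⟨h2, h1⟩, h4⟩
    · intro p hp
      simp only [Finset.mem_filter, Finset.mem_product, Prod.fst_swap, Prod.snd_swap] at *
      obtain ⟨⟨h1, h2⟩, h3⟩ := hp
      exact ⟨⟨⟨h2, h1⟩, by omega⟩, h3⟩
    · intro p _; simp
    · intro p _; simp
    · intro p _; simp
  rw [hgt, ← Finset.sum_add_distrib]
  apply Finset.sum_congr rfl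
  intro p hp
  simp only [hF, Prod.fst_swap, Prod.snd_swap]
  ring

lemma hh_conv (m : ℕ) :
    hh (m : ℤ) ![x, y, x, y] =
      ∑ e ∈ Finset.range (m + 1), h2 (e : ℤ) x y * h2 ((m - e : ℕ) : ℤ) x y := by
  have hrhs : ∀ e ∈ Finset.range (m+1), h2 (e : ℤ) x y * h2 ((m - e : ℕ) : ℤ) x y =
      ∑ p ∈ Finset.range (e+1) ×ˢ Finset.range (m-e+1),
        x ^ p.1 * y ^ (e - p.1) * (x ^ p.2 * y ^ (m - e - p.2)) := by
    intro e _
    rw [show h2 (e:ℤ) x y = ∑ i ∈ Finset.range (e + 1), x ^ i * y ^ (e - i) by simp [h2],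
        show h2 ((m-e:ℕ):ℤ) x y = ∑ i ∈ Finset.range ((m-e) + 1), x ^ i * y ^ ((m-e) - i) by
          simp [h2],
        Finset.sum_mul_sum]
    rw [Finset.sum_product]
  rw [Finset.sum_congr rfl hrhs, Finset.sum_sigma']
  have hlhs : hh (m : ℤ) ![x, y, x, y] =
      ∑ s ∈ (Finset.univ : Finset (Fin 4)).sym m, ((s : Multiset (Fin 4)).map ![x,y,x,y]).prod := by
    simp [hh]
  rw [hlhs]
  symm
  apply Finset.sum_bij'
    (i := fun (a : (_ : ℕ) × ℕ × ℕ) (ha : a ∈ (Finset.range (m+1)).sigma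
        (fun e => Finset.range (e+1) ×ˢ Finset.range (m-e+1))) =>
      (⟨Multiset.replicate a.2.1 (0 : Fin 4) + Multiset.replicate (a.1 - a.2.1) 1 +
        Multiset.replicate a.2.2 2 + Multiset.replicate (m - a.1 - a.2.2) 3, by
          simp only [Finset.mem_sigma, Finset.mem_range, Finset.mem_product] at ha
          simp only [Multiset.card_add, Multiset.card_replicate]
          omega⟩ : Sym (Fin 4) m))
    (j := fun s (hs : s ∈ (Finset.univ : Finset (Fin 4)).sym m) =>
      ⟨Multiset.count 0 s.1 + Multiset.count 1 s.1,
       (Multiset.count 0 s.1, Multiset.count 2 s.1)⟩)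
  case hi =>
    intro a ha
    exact Finset.mem_sym_iff.mpr (fun _ _ => Finset.mem_univ _)
  case hj =>
    intro s hs
    have hc := count_fin4 s.1
    have hcard : Multiset.card s.1 = m := s.2
    simp only [Finset.mem_sigma, Finset.mem_range, Finset.mem_product]
    omega
  case left_neg =>
    intro a ha
    simp only [Finset.mem_sigma, Finset.mem_range, Finset.mem_product] at ha
    obtain ⟨e, i, j⟩ := a
    simp only [Finset.mem_range] at ha
    simp only [Sym.coe_mk, Multiset.count_add, Multiset.count_replicate]
    norm_num
    have h1 : i + (e - i) = e := by omega
    simp [h1]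
  case right_neg =>
    intro a ha
    apply Subtype.ext
    dsimp only
    rw [Multiset.ext]
    intro b
    have hc := count_fin4 a.1
    have hcard : Multiset.card a.1 = m := a.2
    rcases b with ⟨bv, hbv⟩
    interval_cases bv <;>
      simp [Multiset.count_add, Multiset.count_replicate,
        show (⟨0, by omega⟩ : Fin 4) = 0 from rfl, show (⟨1, by omega⟩ : Fin 4) = 1 from rfl,
        show (⟨2, by omega⟩ : Fin 4) = 2 from rfl, show (⟨3, by omega⟩ : Fin 4) = 3 from rfl] <;>
      omega
  case h =>
    intro a ha
    simp only [Sym.coe_mk, Multiset.map_add, Multiset.map_replicate, Multiset.prod_add,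
      Multiset.prod_replicate]
    simp [Matrix.cons_val_zero, Matrix.cons_val_one]
    ring

/-- convolution, variant C -/
lemma convC (M K : ℕ) (hM : M + 1 ≤ K) :
    ∑ k ∈ Finset.range K, h2 ((M : ℤ) - k) x y * h2 (k : ℤ) x y = hh (M : ℤ) ![x, y, x, y] := by
  rw [hh_conv M]
  rw [← Finset.sum_subset (Finset.range_subset_range.mpr hM)
    (fun k _ hk => by
      have : (M : ℤ) - k < 0 := by
        simp only [Finset.mem_range, not_lt] at hk
        omega
      rw [h2_neg this, zero_mul])]
  apply Finset.sum_congr rfl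
  intro k hk
  simp only [Finset.mem_range] at hk
  rw [mul_comm]
  congr 2
  omega

/-- convolution, variant D -/
lemma convD (M K : ℕ) (hM : M + 1 ≤ K) :
    ∑ k ∈ Finset.range K, h2 ((M : ℤ) - k) x y * h2 ((k : ℤ) - 1) x y
      = hh ((M : ℤ) - 1) ![x, y, x, y] := by
  cases M with
  | zero =>
      have hRHS : hh (((0:ℕ) : ℤ) - 1) ![x, y, x, y] = 0 := by norm_num [hh]
      rw [hRHS]
      apply Finset.sum_eq_zero
      intro k hk
      rcases Nat.eq_zero_or_pos k with h | h
      · subst h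
        apply mul_eq_zero_of_right
        apply h2_neg
        norm_num
      · apply mul_eq_zero_of_left
        apply h2_neg
        omega
  | succ m =>
      obtain ⟨K', rfl⟩ : ∃ K', K = K' + 1 := ⟨K - 1, by omega⟩
      rw [Finset.sum_range_succ']
      have h0 : h2 (((m+1 : ℕ) : ℤ) - ((0:ℕ) : ℤ)) x y * h2 (((0:ℕ) : ℤ) - 1) x y = 0 := by
        apply mul_eq_zero_of_right
        apply h2_neg
        norm_num
      rw [h0, add_zero]
      rw [Finset.sum_congr rfl (fun i (_ : i ∈ Finset.range K') => by
        show h2 (((m+1 : ℕ) : ℤ) - ((i+1 : ℕ) : ℤ)) x y * h2 (((i+1 : ℕ) : ℤ) - 1) x y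
            = h2 ((m : ℤ) - i) x y * h2 (i : ℤ) x y
        congr 2 <;> push_cast <;> ring)]
      rw [convC m K' (by omega)]
      congr 1
      push_cast
      ring

end Aux

lemma s2_1q_pos {q : ℝ} (hq0 : 0 < q) (hq1 : q < 1) {l1 l2 : ℕ} (h : l2 ≤ l1) :
    0 < s2 l1 l2 1 q := by
  rw [s2]
  apply div_pos
  · rw [one_pow, one_pow, mul_one, one_mul]
    have : q ^ (l1 + 1) < q ^ l2 := pow_lt_pow_right_of_lt_one₀ hq0 hq1 (by omega)
    linarith
  · linarith

lemma sskew2_zero {q : ℝ} {n1 n2 l1 l2 : ℕ} (hn : n2 ≤ n1) (h : l2 ≤ l1) (hl : n1 < l1) :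
    sskew2 n1 n2 l1 l2 q (q ^ 2) = 0 := by
  rw [sskew2, h2_neg (by omega : (n1 : ℤ) - l1 < 0),
    h2_neg (by omega : (n2 : ℤ) - l1 - 1 < 0)]
  ring

/-- applying the Markov transition `P` to the Schur measure `P_q` yields the
Schur measure with specializations `(1,q)` and `(q,q²,q,q²)`. -/
theorem stmt16 (q : ℝ) (hq0 : 0 < q) (hq1 : q < 1) (n1 n2 : ℕ) (hn : n2 ≤ n1) :
    HasSum
      (fun l : ℕ × ℕ => if l.2 ≤ l.1 then Pq q l.1 l.2 * Ptrans q l.1 l.2 n1 n2 else 0)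
      ((1 - q) ^ 2 * (1 - q ^ 2) ^ 4 * (1 - q ^ 3) ^ 2 * s2 n1 n2 1 q *
        s4 n1 n2 ![q, q ^ 2, q, q ^ 2]) := by
  have hxy : q ≠ q ^ 2 := by nlinarith
  set x := q with hx
  set y := q ^ 2 with hy
  set C : ℝ := (1 - q) * (1 - q ^ 2) ^ 2 * (1 - q ^ 3) with hC
  set f : ℕ × ℕ → ℝ :=
    fun l => if l.2 ≤ l.1 then Pq q l.1 l.2 * Ptrans q l.1 l.2 n1 n2 else 0 with hf
  set D : Finset (ℕ × ℕ) := Finset.range (n1+1) ×ˢ Finset.range (n1+1) with hD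
  -- vanishing outside D
  have hvanish : ∀ l : ℕ × ℕ, l ∉ D → f l = 0 := by
    intro l hl
    simp only [hf]
    by_cases hle : l.2 ≤ l.1
    · have hl1 : n1 < l.1 := by
        simp only [hD, Finset.mem_product, Finset.mem_range] at hl
        omega
      have hz := sskew2_zero (q := q) hn hle hl1
      rw [if_pos hle, Ptrans, hz]
      simp
    · rw [if_neg hle]
  -- the term identity on D
  have hterm : ∀ l1 l2 : ℕ, l2 ≤ l1 →
      Pq q l1 l2 * Ptrans q l1 l2 n1 n2 =
        C ^ 2 * s2 n1 n2 1 q * (s2 l1 l2 x y * sskew2 n1 n2 l1 l2 x y) := by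
    intro l1 l2 hle
    have hne : s2 l1 l2 1 q ≠ 0 := ne_of_gt (s2_1q_pos hq0 hq1 hle)
    rw [Pq, Ptrans]
    field_simp
    ring
  -- the finite sum
  have hsum : ∑ l ∈ D, f l =
      (1 - q) ^ 2 * (1 - q ^ 2) ^ 4 * (1 - q ^ 3) ^ 2 * s2 n1 n2 1 q *
        s4 n1 n2 ![x, y, x, y] := by
    have step1 : ∑ l ∈ D, f l =
        ∑ l ∈ D.filter (fun l => l.2 ≤ l.1),
          C ^ 2 * s2 n1 n2 1 q * (s2 l.1 l.2 x y * sskew2 n1 n2 l.1 l.2 x y) := by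
      rw [Finset.sum_filter]
      apply Finset.sum_congr rfl
      intro l _
      simp only [hf]
      by_cases hle : l.2 ≤ l.1
      · rw [if_pos hle, if_pos hle, hterm l.1 l.2 hle]
      · rw [if_neg hle, if_neg hle]
    rw [step1, ← Finset.mul_sum]
    -- Lagrange identity setup
    set r : Finset ℕ := Finset.range (n1 + 2) with hr
    set F1 : ℕ → ℝ := fun k => h2 ((n1 : ℤ) + 1 - k) x y with hF1
    set F2 : ℕ → ℝ := fun k => h2 ((n2 : ℤ) - k) x y with hF2
    set G1 : ℕ → ℝ := fun k => h2 ((k : ℤ) - 1) x y with hG1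
    set G2 : ℕ → ℝ := fun k => h2 (k : ℤ) x y with hG2
    have hlag := lagrange_id r F1 F2 G1 G2
    -- identify the four sums with hh values
    have e11 : ∑ k ∈ r, F1 k * G1 k = hh (n1 : ℤ) ![x, y, x, y] := by
      have := convD (x := x) (y := y) (n1+1) (n1+2) le_rfl
      rw [show ((n1+1 : ℕ) : ℤ) - 1 = (n1 : ℤ) from by push_cast; ring] at this
      rw [← this]
      apply Finset.sum_congr rfl
      intro k _
      rw [show ((n1+1 : ℕ) : ℤ) = (n1 : ℤ) + 1 from by push_cast; ring]
    have e12 : ∑ k ∈ r, F1 k * G2 k = hh ((n1 : ℤ) + 1) ![x, y, x, y] := by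
      have := convC (x := x) (y := y) (n1+1) (n1+2) le_rfl
      rw [show (((n1+1 : ℕ)) : ℤ) = (n1 : ℤ) + 1 from by push_cast; ring] at this
      rw [← this]
    have e21 : ∑ k ∈ r, F2 k * G1 k = hh ((n2 : ℤ) - 1) ![x, y, x, y] := by
      have := convD (x := x) (y := y) n2 (n1+2) (by omega)
      rw [← this]
    have e22 : ∑ k ∈ r, F2 k * G2 k = hh (n2 : ℤ) ![x, y, x, y] := by
      have := convC (x := x) (y := y) n2 (n1+2) (by omega)
      rw [← this]
    rw [e11, e12, e21, e22] at hlag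
    -- reindex the filtered pair sum
    have hbij : ∑ p ∈ (r ×ˢ r).filter (fun p => p.1 < p.2),
        (F1 p.1 * F2 p.2 - F1 p.2 * F2 p.1) * (G1 p.1 * G2 p.2 - G1 p.2 * G2 p.1) =
        ∑ l ∈ D.filter (fun l => l.2 ≤ l.1), s2 l.1 l.2 x y * sskew2 n1 n2 l.1 l.2 x y := by
      apply Finset.sum_nbij' (fun p => (p.2 - 1, p.1)) (fun l => (l.2, l.1 + 1))
      · intro p hp
        simp only [hr, hD, Finset.mem_filter, Finset.mem_product, Finset.mem_range] at *
        omega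
      · intro l hl
        simp only [hr, hD, Finset.mem_filter, Finset.mem_product, Finset.mem_range] at *
        omega
      · intro p hp
        simp only [hr, Finset.mem_filter, Finset.mem_product, Finset.mem_range] at hp
        have : p.2 - 1 + 1 = p.2 := by omega
        simp [this]
      · intro l hl
        simp
      · intro p hp
        obtain ⟨p1, k2'⟩ := p
        simp only [hr, Finset.mem_filter, Finset.mem_product, Finset.mem_range] at hp
        obtain ⟨⟨hp1, hp2⟩, hplt⟩ := hp
        obtain ⟨k2, rfl⟩ : ∃ k2, k2' = k2 + 1 := ⟨k2' - 1, by omega⟩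
        simp only [hF1, hF2, hG1, hG2, sskew2, Nat.add_sub_cancel]
        rw [s2_eq_h2 hxy]
        push_cast
        rw [show ((n1:ℤ) - p1 + 1) = ((n1:ℤ) + 1 - p1) from by ring,
            show ((n2:ℤ) - k2 - 1) = ((n2:ℤ) - (k2+1)) from by ring,
            show ((k2:ℤ) + 1 - 1) = (k2:ℤ) from by ring]
        ring
    rw [hbij] at hlag
    rw [← hlag]
    simp only [s4]
    ring
  rw [← hsum]
  exact hasSum_sum_of_ne_finset_zero hvanish
end
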